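/- arXiv:2005.06322 — 9 statements merged into one kernel-verified Lean document; each statement's English description precedes it below -/
import Mathlib

section
/- For every weight function g : ℕ → [0,∞) with g(n) → ∞ and n/g(n) not tending to 0, and every unbounded modulus function f, there exists an infinite set A ⊆ ℕ such that lim_{n→∞} f(|A ∩ [1,n]|)/f(g(n)) = 0. In particular the ideal 𝒵_g(f) strictly contains the ideal Fin of finite sets. -/
open Filter Set

/-- A modulus function: nonnegative, vanishing exactly at 0, subadditive,
non-decreasing, right continuous at 0 (all on `[0,∞)`). -/
def IsModulus (f : ℝ → ℝ) : Prop :=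
  (∀ x : ℝ, 0 ≤ x → 0 ≤ f x) ∧
  (∀ x : ℝ, 0 ≤ x → (f x = 0 ↔ x = 0)) ∧
  (∀ x y : ℝ, 0 ≤ x → 0 ≤ y → f (x + y) ≤ f x + f y) ∧
  (∀ x y : ℝ, 0 ≤ x → x ≤ y → f x ≤ f y) ∧
  ContinuousWithinAt f (Set.Ici 0) 0

/-- An unbounded modulus function. -/
def IsUnboundedModulus (f : ℝ → ℝ) : Prop :=
  IsModulus f ∧ Tendsto f atTop atTop

/-- A weight function `g : ℕ → [0,∞)` with `g n → ∞` and `n / g n ↛ 0`. -/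
def IsWeight (g : ℕ → ℝ) : Prop :=
  (∀ n, 0 ≤ g n) ∧ Tendsto g atTop atTop ∧
  ¬ Tendsto (fun n : ℕ => (n : ℝ) / g n) atTop (nhds 0)

open scoped Classical in
/-- `|A ∩ [1,n]|`. -/
noncomputable def cnt (A : Set ℕ) (n : ℕ) : ℕ :=
  ((Finset.Icc 1 n).filter (fun m => m ∈ A)).card

/-- The ideal `𝒵_g(f)` of sets whose `f`-density of weight `g` is zero
(for nonnegative sequences, `limsup = 0` is equivalent to convergence to `0`). -/
noncomputable def Zd (f : ℝ → ℝ) (g : ℕ → ℝ) : Set (Set ℕ) :=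
  {A | Tendsto (fun n => f (cnt A n) / f (g n)) atTop (nhds 0)}

theorem stmt0 (g : ℕ → ℝ) (hg : IsWeight g) (f : ℝ → ℝ) (hf : IsUnboundedModulus f) :
    (∀ A : Set ℕ, A.Finite → A ∈ Zd f g) ∧
    ∃ A : Set ℕ, A.Infinite ∧ A ∈ Zd f g := by
  classical

  obtain ⟨⟨hf0, hfz, -, hfmono, -⟩, hftop⟩ := hf
  obtain ⟨-, hgtop, -⟩ := hg
  have hF : Tendsto (fun n => f (g n)) atTop atTop := hftop.comp hgtop
  have hfpos : ∀ x : ℝ, 0 < x → 0 < f x := by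
    intro x hx
    rcases lt_or_eq_of_le (hf0 x hx.le) with h | h
    · exact h
    · exact absurd ((hfz x hx.le).mp h.symm) hx.ne'
  constructor
  · intro A hA
    have hcnt : ∀ n, cnt A n ≤ hA.toFinset.card := by
      intro n
      apply Finset.card_le_card
      intro m hm
      simp only [cnt, Finset.mem_filter] at hm
      exact hA.mem_toFinset.mpr hm.2
    have h1 : Tendsto (fun n => f (hA.toFinset.card) / f (g n)) atTop (nhds 0) :=
      tendsto_const_nhds.div_atTop hF
    have hpos := hF.eventually_gt_atTop 0
    refine tendsto_of_tendsto_of_tendsto_of_le_of_le' tendsto_const_nhds h1 ?_ ?_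
    · filter_upwards [hpos] with n hn
      exact div_nonneg (hf0 _ (Nat.cast_nonneg _)) hn.le
    · filter_upwards [hpos] with n hn
      have h2 : f (cnt A n) ≤ f (hA.toFinset.card) :=
        hfmono _ _ (Nat.cast_nonneg _) (by exact_mod_cast hcnt n)
      exact div_le_div_of_nonneg_right h2 hn.le
  · have hT : ∀ k : ℕ, ∃ N : ℕ, ∀ m, N ≤ m → ((k:ℝ)+1) * f ((k:ℝ)+1) ≤ f (g m) :=
      fun k => eventually_atTop.mp (hF.eventually_ge_atTop _)
    choose T hT using hT
    set s : ℕ → ℕ := fun k => Nat.rec (T 0) (fun k ih => max (ih + 1) (T (k+1))) k with hs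
    have hs_succ : ∀ k, s (k+1) = max (s k + 1) (T (k+1)) := fun k => rfl
    have hs_mono : StrictMono s := strictMono_nat_of_lt_succ (fun k => by
      rw [hs_succ]; exact lt_of_lt_of_le (Nat.lt_succ_self _) (le_max_left _ _))
    have hTs : ∀ k, T k ≤ s k := by
      intro k
      cases k with
      | zero => exact le_refl _
      | succ k => rw [hs_succ]; exact le_max_right _ _
    refine ⟨Set.range s, Set.infinite_range_of_injective hs_mono.injective, ?_⟩
    rw [Zd, Set.mem_setOf_eq, Metric.tendsto_atTop]
    intro ε hε
    obtain ⟨K, hK⟩ := exists_nat_gt (1/ε)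
    refine ⟨s K, fun n hn => ?_⟩
    set k := Nat.findGreatest (fun j => s j ≤ n) n with hk
    have hKn : K ≤ n := le_trans hs_mono.le_apply hn
    have hkK : K ≤ k := Nat.le_findGreatest hKn hn
    have hskn : s k ≤ n := Nat.findGreatest_spec (P := fun j => s j ≤ n) hKn hn
    have hcnt : cnt (Set.range s) n ≤ k + 1 := by
      unfold cnt
      refine le_trans (Finset.card_le_card (t := (Finset.range (k+1)).image s) ?_)
        (Finset.card_image_le.trans_eq (Finset.card_range (k+1)))
      intro m hm
      rw [Finset.mem_filter] at hm
      obtain ⟨hm1, j, rfl⟩ := hm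
      rw [Finset.mem_Icc] at hm1
      simp only [Finset.mem_image, Finset.mem_range]
      refine ⟨j, ?_, rfl⟩
      by_contra hj
      push_neg at hj
      exact Nat.findGreatest_is_greatest (Nat.lt_of_succ_le hj)
        (le_trans hs_mono.le_apply hm1.2) hm1.2
    have hfgn : ((k:ℝ)+1) * f ((k:ℝ)+1) ≤ f (g n) := hT k n (le_trans (hTs k) hskn)
    have hfk1 : 0 < f ((k:ℝ)+1) := hfpos _ (by positivity)
    have hFpos : 0 < f (g n) := lt_of_lt_of_le (by positivity) hfgn
    have hnum : f ((cnt (Set.range s) n : ℕ) : ℝ) ≤ f ((k:ℝ)+1) := by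
      apply hfmono _ _ (Nat.cast_nonneg _)
      exact_mod_cast hcnt
    have hratio : f ((cnt (Set.range s) n : ℕ) : ℝ) / f (g n) ≤ 1/((k:ℝ)+1) := by
      rw [div_le_div_iff₀ hFpos (by positivity)]
      nlinarith [hnum, hfgn, hfk1, Nat.cast_nonneg (α := ℝ) k]
    have hεk : (1:ℝ)/((k:ℝ)+1) < ε := by
      rw [div_lt_iff₀ (by positivity)]
      have h1 : (1:ℝ) < K * ε := (div_lt_iff₀ hε).mp hK
      have h2 : (K:ℝ) ≤ (k:ℝ)+1 := by exact_mod_cast Nat.le_succ_of_le hkK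
      nlinarith
    rw [Real.dist_eq, sub_zero, abs_of_nonneg (div_nonneg (hf0 _ (Nat.cast_nonneg _)) hFpos.le)]
    exact lt_of_le_of_lt hratio hεk
end

section
/- For any unbounded modulus function f and any weight function g with g(n) → ∞ and n/g(n) ↛ 0, the ideal 𝒵_g(f) is tall (dense): every infinite set A ⊆ ℕ contains an infinite subset B with upper f-density of weight g equal to 0. -/
open Filter Set

lemma aux_div (a D k : ℝ) (ha : 0 ≤ a) (hk : 1 ≤ k) (hD : k * (1 + a) ≤ D) :
    a / D ≤ 1 / k := by
  have hD0 : 0 < D := lt_of_lt_of_le (by nlinarith) hD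
  rw [div_le_div_iff₀ hD0 (by linarith)]
  nlinarith

theorem stmt2 (f : ℝ → ℝ) (hf : IsUnboundedModulus f) (g : ℕ → ℝ) (hg : IsWeight g) :
    ∀ A : Set ℕ, A.Infinite → ∃ B ⊆ A, B.Infinite ∧ B ∈ Zd f g := by
  classical
  intro A hA
  obtain ⟨⟨hf0, hfz, hfsub, hfmono, hfc⟩, hfu⟩ := hf
  obtain ⟨hg0, hgt, -⟩ := hg
  have hFg : Tendsto (fun n => f (g n)) atTop atTop := hfu.comp hgt
  -- choose thresholds N k
  have hNex : ∀ k : ℕ, ∃ Nk : ℕ, ∀ n ≥ Nk, (k : ℝ) * (1 + f k) ≤ f (g n) := by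
    intro k
    exact eventually_atTop.mp (hFg.eventually_ge_atTop ((k : ℝ) * (1 + f k)))
  choose N hN using hNex
  have hex : ∀ m : ℕ, ∃ a, a ∈ A ∧ m < a := by
    intro m
    obtain ⟨a, ha, hma⟩ := hA.exists_gt m
    exact ⟨a, ha, hma⟩
  set b : ℕ → ℕ := fun m => Nat.rec (Classical.choose (hex (N 1)))
      (fun m ih => Classical.choose (hex (max ih (N (m + 2))))) m with hbdef
  have hb0 : b 0 = Classical.choose (hex (N 1)) := rfl
  have hbs : ∀ m, b (m + 1) = Classical.choose (hex (max (b m) (N (m + 2)))) := fun m => rfl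
  have hbA : ∀ m, b m ∈ A := by
    intro m
    cases m with
    | zero => exact (Classical.choose_spec (hex (N 1))).1
    | succ m => rw [hbs]; exact (Classical.choose_spec (hex _)).1
  have hblt : ∀ m, b m < b (m + 1) := by
    intro m
    rw [hbs]
    exact lt_of_le_of_lt (le_max_left _ _) (Classical.choose_spec (hex _)).2
  have hbN : ∀ m, N (m + 1) ≤ b m := by
    intro m
    cases m with
    | zero => exact le_of_lt (Classical.choose_spec (hex (N 1))).2
    | succ m =>
      rw [hbs]
      exact le_of_lt (lt_of_le_of_lt (le_max_right _ _) (Classical.choose_spec (hex _)).2)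
  have hbm : StrictMono b := strictMono_nat_of_lt_succ hblt
  refine ⟨Set.range b, Set.range_subset_iff.mpr hbA, Set.infinite_range_of_injective hbm.injective, ?_⟩
  -- counting bound
  have hcnt : ∀ n m : ℕ, n < b m → cnt (Set.range b) n ≤ m := by
    intro n m hnm
    have hsub : ((Finset.Icc 1 n).filter (fun x => x ∈ Set.range b)) ⊆
        (Finset.range m).image b := by
      intro x hx
      simp only [Finset.mem_filter, Finset.mem_Icc, Set.mem_range] at hx
      obtain ⟨⟨-, hxn⟩, i, rfl⟩ := hx
      have : b i < b m := lt_of_le_of_lt hxn hnm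
      exact Finset.mem_image.mpr ⟨i, Finset.mem_range.mpr (hbm.lt_iff_lt.mp this), rfl⟩
    calc cnt (Set.range b) n ≤ ((Finset.range m).image b).card := by
          unfold cnt; exact Finset.card_le_card (by convert hsub using 2)
      _ ≤ m := le_trans Finset.card_image_le (by simp)
  -- key: b (j-1) ≤ n when j = cnt ≥ 1
  have hble : ∀ n j : ℕ, cnt (Set.range b) n = j → 1 ≤ j → b (j - 1) ≤ n := by
    intro n j hj h1
    by_contra h
    push_neg at h
    have := hcnt n (j - 1) h
    omega
  rw [Zd, Set.mem_setOf_eq, Metric.tendsto_atTop]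
  intro ε hε
  obtain ⟨k', hk'⟩ := exists_nat_one_div_lt hε
  set k := k' + 1 with hkdef
  have hk1 : (1 : ℝ) ≤ (k : ℝ) := by exact_mod_cast Nat.one_le_iff_ne_zero.mpr (by omega)
  refine ⟨N k, fun n hn => ?_⟩
  set j := cnt (Set.range b) n with hj
  -- denominator bound
  have hD : (k : ℝ) * (1 + f j) ≤ f (g n) := by
    rcases le_or_gt j k with hjk | hjk
    · have h1 : f j ≤ f k := hfmono _ _ (by positivity) (by exact_mod_cast hjk)
      have h2 := hN k n hn
      nlinarith [hf0 (k : ℝ) (by positivity)]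
    · have h1 : 1 ≤ j := by omega
      have h2 : N j ≤ n := by
        have := hbN (j - 1)
        have hb' := hble n j rfl h1
        have : N j ≤ b (j - 1) := by
          have := hbN (j - 1); rwa [Nat.sub_add_cancel h1] at this
        omega
      have h3 := hN j n h2
      have h4 : (k : ℝ) ≤ (j : ℝ) := by exact_mod_cast le_of_lt hjk
      nlinarith [hf0 (j : ℝ) (by positivity)]
  have hfj0 : 0 ≤ f j := hf0 _ (by positivity)
  have hDpos : 0 < f (g n) := lt_of_lt_of_le (by nlinarith) hD
  have hratio : f j / f (g n) ≤ 1 / k := aux_div _ _ _ hfj0 hk1 hD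
  have hnn : 0 ≤ f j / f (g n) := div_nonneg hfj0 (le_of_lt hDpos)
  rw [Real.dist_eq, sub_zero, abs_of_nonneg hnn]
  calc f j / f (g n) ≤ 1 / k := hratio
    _ < ε := by exact_mod_cast hk'
end

section
/- Let f₁, f₂ be modulus functions and g₁, g₂ weight functions. If there exist constants c₁, c₂ > 0 and k ∈ ℕ such that f₁(x)/f₂(x) ≥ c₁ for all x ≠ 0 and f₁(g₁(n))/f₂(g₂(n)) ≤ c₂ for all n ≥ k, then 𝒵_{g₁}(f₁) ⊆ 𝒵_{g₂}(f₂). -/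
open Filter Set

theorem stmt3 (f₁ f₂ : ℝ → ℝ) (hf₁ : IsModulus f₁) (hf₂ : IsModulus f₂)
    (g₁ g₂ : ℕ → ℝ) (hg₁ : IsWeight g₁) (hg₂ : IsWeight g₂)
    (c₁ c₂ : ℝ) (hc₁ : 0 < c₁) (hc₂ : 0 < c₂) (k : ℕ)
    (h1 : ∀ x : ℝ, 0 ≤ x → x ≠ 0 → c₁ ≤ f₁ x / f₂ x)
    (h2 : ∀ n, k ≤ n → f₁ (g₁ n) / f₂ (g₂ n) ≤ c₂) :
    Zd f₁ g₁ ⊆ Zd f₂ g₂ := by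
  intro A hA
  obtain ⟨f₁nn, f₁zero, -, -, -⟩ := hf₁
  obtain ⟨f₂nn, f₂zero, -, -, -⟩ := hf₂
  have hg₁pos : ∀ᶠ n in atTop, 0 < g₁ n := hg₁.2.1.eventually_gt_atTop 0
  have hg₂pos : ∀ᶠ n in atTop, 0 < g₂ n := hg₂.2.1.eventually_gt_atTop 0
  have hk : ∀ᶠ n in atTop, k ≤ n := eventually_ge_atTop k
  have hlim : Tendsto (fun n => (c₂ / c₁) * (f₁ (cnt A n) / f₁ (g₁ n))) atTop (nhds 0) := by
    simpa using hA.const_mul (c₂ / c₁)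
  refine squeeze_zero' ?_ ?_ hlim
  · filter_upwards with n
    exact div_nonneg (f₂nn _ (Nat.cast_nonneg _)) (f₂nn _ (hg₂.1 n))
  · filter_upwards [hg₁pos, hg₂pos, hk] with n h1n h2n hkn
    have hf₁g : 0 < f₁ (g₁ n) := by
      rcases lt_or_eq_of_le (f₁nn _ h1n.le) with h | h
      · exact h
      · exact absurd (((f₁zero _ h1n.le).mp h.symm) ▸ h1n) (lt_irrefl 0)
    have hf₂g : 0 < f₂ (g₂ n) := by
      rcases lt_or_eq_of_le (f₂nn _ h2n.le) with h | h
      · exact h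
      · exact absurd (((f₂zero _ h2n.le).mp h.symm) ▸ h2n) (lt_irrefl 0)
    have h2' : f₁ (g₁ n) ≤ c₂ * f₂ (g₂ n) := by
      have := h2 n hkn
      rwa [div_le_iff₀ hf₂g] at this
    by_cases hc : (cnt A n : ℝ) = 0
    · rw [hc, (f₂zero 0 le_rfl).mpr rfl, (f₁zero 0 le_rfl).mpr rfl, zero_div, zero_div, mul_zero]
    · have hx : (0:ℝ) ≤ (cnt A n : ℝ) := Nat.cast_nonneg _
      have h1' : c₁ ≤ f₁ (cnt A n) / f₂ (cnt A n) := h1 _ hx hc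
      have hf₂x : 0 < f₂ (cnt A n) := by
        rcases lt_or_eq_of_le (f₂nn _ hx) with h | h
        · exact h
        · exact absurd ((f₂zero _ hx).mp h.symm) hc
      have hle : c₁ * f₂ (cnt A n) ≤ f₁ (cnt A n) := by
        rw [le_div_iff₀ hf₂x] at h1'
        exact h1'
      rw [div_mul_div_comm, div_le_div_iff₀ hf₂g (mul_pos hc₁ hf₁g)]
      nlinarith [mul_le_mul hle h2' (f₁nn _ h1n.le) (f₁nn _ hx)]
end

section
/- If f is an unbounded modulus function and g is a weight function such that f(n)/f(g(n)) → ∞, then 𝒵_g(f) is a proper subset of 𝒵(f), where 𝒵(f) = {A ⊆ ℕ : limsup_n f(|A ∩ [1,n]|)/f(n) = 0}. -/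
open Filter Set

set_option linter.unusedSectionVars false

/-- Auxiliary piecewise-linear counting function built from block ends `a`
and target values `t`. -/
def cfun (a t : ℕ → ℕ) (n : ℕ) : ℕ := (Finset.range (n+2)).sup fun k => t k - (a k - n)

section cf
variable {a t : ℕ → ℕ}

lemma cfun_mono : Monotone (cfun a t) := by
  apply monotone_nat_of_le_succ
  intro n
  apply Finset.sup_le
  intro k hk
  simp only [Finset.mem_range] at hk
  refine le_trans ?_ (Finset.le_sup (f := fun k => t k - (a k - (n+1)))
    (Finset.mem_range.2 (show k < n+3 by omega)))
  show t k - (a k - n) ≤ t k - (a k - (n+1))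
  omega

variable (hat : ∀ k, a k + t (k+1) < a (k+1))

include hat

lemma a_strictmono : StrictMono a :=
  strictMono_nat_of_lt_succ fun k => by have := hat k; omega

lemma le_a : ∀ k, k ≤ a k := fun _ => (a_strictmono hat).le_apply

lemma cfun_succ_le (n : ℕ) : cfun a t (n+1) ≤ cfun a t n + 1 := by
  apply Finset.sup_le
  intro k hk
  simp only [Finset.mem_range] at hk
  show t k - (a k - (n+1)) ≤ cfun a t n + 1
  rcases Nat.lt_or_ge k (n+2) with hk2 | hk2
  · have h3 : t k - (a k - n) ≤ cfun a t n :=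
      Finset.le_sup (f := fun k => t k - (a k - n)) (Finset.mem_range.2 hk2)
    omega
  · have hk3 : k = n + 2 := by omega
    subst hk3
    have h1 : a (n+1) + t (n+2) < a (n+2) := hat (n+1)
    have h2 := le_a hat (n+1)
    omega

lemma cfun_ge {K n : ℕ} (hn : a K ≤ n) : t K ≤ cfun a t n := by
  have hK : K < n + 2 := by have := le_a hat K; omega
  refine le_trans ?_ (Finset.le_sup (f := fun k => t k - (a k - n)) (Finset.mem_range.2 hK))
  show t K ≤ t K - (a K - n)
  omega

variable (htm : ∀ k, t k < t (k+1))
include htm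

lemma t_mono : Monotone t := (strictMono_nat_of_lt_succ htm).monotone

lemma cfun_le {K n : ℕ} (hn : n < a (K+1)) :
    cfun a t n ≤ max (t K) (t (K+1) - (a (K+1) - n)) := by
  apply Finset.sup_le
  intro j hj
  show t j - (a j - n) ≤ _
  rcases Nat.lt_or_ge j (K+1) with hj1 | hj1
  · have h1 : t j ≤ t K := t_mono hat htm (by omega)
    have h2 := le_max_left (t K) (t (K+1) - (a (K+1) - n))
    omega
  · rcases Nat.eq_or_lt_of_le hj1 with hj2 | hj2
    · rw [← hj2]
      exact le_max_right _ _
    · obtain ⟨m, rfl⟩ : ∃ m, j = m + 1 := ⟨j - 1, by omega⟩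
      have h1 := hat m
      have h2 : a (K+1) ≤ a m := (a_strictmono hat).monotone (by omega)
      have h3 : t (m+1) - (a (m+1) - n) = 0 := by omega
      rw [h3]
      exact Nat.zero_le _

lemma cfun_at (K : ℕ) : cfun a t (a K) = t K := by
  refine le_antisymm ?_ (cfun_ge hat le_rfl)
  refine le_trans (cfun_le hat htm ((a_strictmono hat) (show K < K + 1 by omega))) ?_
  have h1 := hat K
  have h2 : t (K+1) - (a (K+1) - a K) = 0 := by omega
  rw [h2]
  simp

lemma cfun_zero (ht0 : t 0 = 0) (ha0 : a 0 = 0) : cfun a t 0 = 0 := by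
  have := cfun_at hat htm 0
  rwa [ha0, ht0] at this

end cf

lemma cnt_zero (A : Set ℕ) : cnt A 0 = 0 := by
  simp [cnt]

open scoped Classical in
lemma cnt_succ (A : Set ℕ) (n : ℕ) :
    cnt A (n+1) = cnt A n + (if (n+1) ∈ A then 1 else 0) := by
  have hI : Finset.Icc 1 (n+1) = insert (n+1) (Finset.Icc 1 n) := by
    ext m; simp only [Finset.mem_Icc, Finset.mem_insert]; omega
  rw [cnt, hI, Finset.filter_insert]
  by_cases hA : (n+1) ∈ A
  · rw [if_pos hA, if_pos hA, Finset.card_insert_of_notMem (by simp), cnt]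
  · rw [if_neg hA, if_neg hA, cnt]; omega

lemma cnt_cfun {a t : ℕ → ℕ} (hat : ∀ k, a k + t (k+1) < a (k+1))
    (htm : ∀ k, t k < t (k+1)) (ht0 : t 0 = 0) (ha0 : a 0 = 0) (n : ℕ) :
    cnt {m : ℕ | cfun a t (m-1) < cfun a t m} n = cfun a t n := by
  induction n with
  | zero => rw [cnt_zero, cfun_zero hat htm ht0 ha0]
  | succ n ih =>
    rw [cnt_succ, ih]
    have hmono : cfun a t n ≤ cfun a t (n+1) := cfun_mono (by omega)
    have hstep := cfun_succ_le hat (t := t) n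
    by_cases hA : (n+1) ∈ {m : ℕ | cfun a t (m-1) < cfun a t m}
    · rw [if_pos hA]
      simp only [Set.mem_setOf_eq, Nat.add_sub_cancel] at hA
      omega
    · rw [if_neg hA]
      simp only [Set.mem_setOf_eq, Nat.add_sub_cancel] at hA
      omega

lemma modulus_pos {f : ℝ → ℝ} (hf : IsModulus f) {x : ℝ} (hx : 0 < x) : 0 < f x :=
  lt_of_le_of_ne (hf.1 x hx.le) fun e => hx.ne' ((hf.2.1 x hx.le).1 e.symm)

lemma exists_next {f : ℝ → ℝ} {g : ℕ → ℝ} (hf : IsUnboundedModulus f) (hg : IsWeight g)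
    (h : Tendsto (fun n : ℕ => f n / f (g n)) atTop atTop) (C : ℝ) (B : ℕ) :
    ∃ n : ℕ, C < g n ∧ B + ⌈g n⌉₊ < n := by
  have hm := hf.1.2.2.2.1
  have hsub := hf.1.2.2.1
  have hg0 := hg.1
  have e1 : ∀ᶠ n : ℕ in atTop, C < g n := hg.2.1.eventually_gt_atTop C
  have e2 : ∀ᶠ n : ℕ in atTop, (1:ℝ) ≤ g n := hg.2.1.eventually_ge_atTop 1
  have e3 : ∀ᶠ n : ℕ in atTop, f (B+2) ≤ f (g n) :=
    (hf.2.comp hg.2.1).eventually_ge_atTop (f (B+2))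
  have e4 : ∀ᶠ n : ℕ in atTop, 2 < f n / f (g n) := h.eventually_gt_atTop 2
  obtain ⟨n, h1, h2, h3, h4⟩ := (e1.and (e2.and (e3.and e4))).exists
  refine ⟨n, h1, ?_⟩
  have hfg : 0 < f (g n) :=
    lt_of_lt_of_le (modulus_pos hf.1 one_pos) (hm 1 (g n) one_pos.le h2)
  have h5 : 2 * f (g n) < f n := by
    have := (lt_div_iff₀ hfg).1 h4; linarith
  by_contra hcon
  push_neg at hcon
  have hceil : (⌈g n⌉₊ : ℝ) < g n + 1 := Nat.ceil_lt_add_one (hg0 n)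
  have hle : (n:ℝ) ≤ g n + ((B:ℝ)+2) := by
    have h6 : (n:ℝ) ≤ (B:ℝ) + (⌈g n⌉₊:ℝ) := by exact_mod_cast hcon
    linarith
  have h7 : f n ≤ f (g n) + f ((B:ℝ)+2) :=
    le_trans (hm _ _ (Nat.cast_nonneg n) hle) (hsub (g n) ((B:ℝ)+2) (hg0 n) (by positivity))
  linarith

lemma exists_seq {f : ℝ → ℝ} {g : ℕ → ℝ} (hf : IsUnboundedModulus f) (hg : IsWeight g)
    (h : Tendsto (fun n : ℕ => f n / f (g n)) atTop atTop) :
    ∃ a : ℕ → ℕ, a 0 = 0 ∧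
      ∀ k, (⌈g (a k)⌉₊ : ℝ) < g (a (k+1)) ∧ a k + ⌈g (a (k+1))⌉₊ < a (k+1) := by
  choose F hF1 hF2 using exists_next hf hg h
  refine ⟨fun k => Nat.rec 0 (fun _ prev => F ((⌈g prev⌉₊ : ℝ)) prev) k, rfl, fun k => ?_⟩
  exact ⟨hF1 _ _, hF2 _ _⟩

theorem stmt5 (f : ℝ → ℝ) (hf : IsUnboundedModulus f) (g : ℕ → ℝ) (hg : IsWeight g)
    (h : Tendsto (fun n : ℕ => f n / f (g n)) atTop atTop) :
    Zd f g ⊂ Zd f (fun n => (n : ℝ)) := by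
  obtain ⟨hfmod, hftop⟩ := hf
  have hm := hfmod.2.2.2.1
  have hsub := hfmod.2.2.1
  have hnn := hfmod.1
  have hg0 := hg.1
  have hgtop := hg.2.1
  have hf1 : 0 < f 1 := modulus_pos hfmod one_pos
  -- the inclusion
  have hsubset : Zd f g ⊆ Zd f (fun n => (n:ℝ)) := by
    intro A hA
    simp only [Zd, Set.mem_setOf_eq] at hA ⊢
    have hinv : Tendsto (fun n : ℕ => f (g n) / f n) atTop (nhds 0) := by
      have := h.inv_tendsto_atTop
      exact this.congr fun n => by rw [Pi.inv_apply, inv_div]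
    have hmul := hA.mul hinv
    rw [mul_zero] at hmul
    apply hmul.congr'
    filter_upwards [hgtop.eventually_ge_atTop 1, eventually_ge_atTop 1] with n hn hn1
    have hfg : 0 < f (g n) := lt_of_lt_of_le hf1 (hm 1 (g n) one_pos.le hn)
    have hfn : 0 < f n := lt_of_lt_of_le hf1 (hm 1 n one_pos.le (by exact_mod_cast hn1))
    field_simp
  -- the strict part
  obtain ⟨a, ha0, hseq⟩ := exists_seq ⟨hfmod, hftop⟩ hg h
  set t : ℕ → ℕ := fun k => if k = 0 then 0 else ⌈g (a k)⌉₊ with ht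
  have ht0 : t 0 = 0 := by simp [ht]
  have htk : ∀ k, 1 ≤ k → t k = ⌈g (a k)⌉₊ := fun k hk => by simp [ht]; omega
  have hat : ∀ k, a k + t (k+1) < a (k+1) := fun k => by
    rw [htk (k+1) (by omega)]; exact (hseq k).2
  have hgapos : ∀ k, 1 ≤ k → 0 < g (a k) := by
    intro k hk
    obtain ⟨j, rfl⟩ : ∃ j, k = j + 1 := ⟨k-1, by omega⟩
    have h1 := (hseq j).1
    have h2 : (0:ℝ) ≤ (⌈g (a j)⌉₊:ℝ) := Nat.cast_nonneg _
    linarith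
  have htm : ∀ k, t k < t (k+1) := by
    intro k
    rw [htk (k+1) (by omega), Nat.lt_ceil]
    rcases Nat.eq_zero_or_pos k with rfl | hk
    · rw [ht0]
      exact_mod_cast hgapos 1 le_rfl
    · rw [htk k hk]
      exact (hseq k).1
  have hast : StrictMono a := a_strictmono hat
  set A : Set ℕ := {m : ℕ | cfun a t (m-1) < cfun a t m} with hAdef
  have hcnt : ∀ n, cnt A n = cfun a t n := cnt_cfun hat htm ht0 ha0
  have htk_ge : ∀ k, 1 ≤ k → g (a k) ≤ (t k : ℝ) := fun k hk => by
    rw [htk k hk]; exact Nat.le_ceil _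
  -- A belongs to Zd f id
  have hAin : A ∈ Zd f (fun n => (n:ℝ)) := by
    simp only [Zd, Set.mem_setOf_eq, hcnt]
    rw [Metric.tendsto_atTop]
    intro ε hε
    set M : ℝ := 16/ε + 4 with hM
    have EV : ∀ᶠ n : ℕ in atTop,
        (1 ≤ g n ∧ f (⌈g n⌉₊) ≤ 2 * f (g n) ∧ M * f (g n) ≤ f n) := by
      filter_upwards [hgtop.eventually_ge_atTop 1, h.eventually_ge_atTop M] with n h1 h2
      have hfg : 0 < f (g n) := lt_of_lt_of_le hf1 (hm 1 (g n) one_pos.le h1)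
      refine ⟨h1, ?_, ?_⟩
      · have hceil : (⌈g n⌉₊:ℝ) ≤ g n + 1 := le_of_lt (Nat.ceil_lt_add_one (hg0 n))
        have c1 : f (⌈g n⌉₊) ≤ f (g n + 1) := hm _ _ (Nat.cast_nonneg _) hceil
        have c2 : f (g n + 1) ≤ f (g n) + f 1 := hsub _ _ (hg0 n) one_pos.le
        have c3 : f 1 ≤ f (g n) := hm _ _ one_pos.le h1
        linarith
      · exact (le_div_iff₀ hfg).1 h2
    have haTop : Tendsto a atTop atTop := hast.tendsto_atTop
    obtain ⟨N0, hN0⟩ := eventually_atTop.1 (haTop.eventually EV)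
    set K0 : ℕ := max N0 1 with hK0
    refine ⟨a K0, fun n hn => ?_⟩
    have hK0n : K0 ≤ n := le_trans (le_a hat K0) hn
    have hk1 : a (Nat.findGreatest (fun j => a j ≤ n) n) ≤ n :=
      Nat.findGreatest_spec (P := fun j => a j ≤ n) (m := K0) hK0n hn
    have hkK0 : K0 ≤ Nat.findGreatest (fun j => a j ≤ n) n :=
      Nat.le_findGreatest (P := fun j => a j ≤ n) hK0n hn
    set k := Nat.findGreatest (fun j => a j ≤ n) n with hkdef
    have hk2 : n < a (k+1) := by
      by_contra hcon
      push_neg at hcon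
      exact Nat.findGreatest_is_greatest (Nat.lt_succ_self k)
        (le_trans (le_a hat (k+1)) hcon) hcon
    obtain ⟨hQ1, hQ2, hQ3⟩ := hN0 k (le_trans (le_max_left _ _) hkK0)
    obtain ⟨hQ1', hQ2', hQ3'⟩ := hN0 (k+1) (by omega)
    have hk_ge1 : 1 ≤ k := le_trans (le_max_right _ _) hkK0
    have hfgk : 0 < f (g (a k)) := lt_of_lt_of_le hf1 (hm 1 _ one_pos.le hQ1)
    have hfgk' : 0 < f (g (a (k+1))) := lt_of_lt_of_le hf1 (hm 1 _ one_pos.le hQ1')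
    have hcb := cfun_le hat htm hk2
    have hMε : ε/2 * M = 8 + 2*ε := by
      rw [hM]; field_simp; ring
    have hfn_pos : 0 < f n := by
      have : (1:ℝ) ≤ (n:ℝ) := by
        have : 1 ≤ n := le_trans (le_trans hk_ge1 (le_a hat k)) hk1
        exact_mod_cast this
      exact lt_of_lt_of_le hf1 (hm 1 _ one_pos.le this)
    have key : f (cfun a t n) ≤ ε/2 * f n := by
      rcases le_or_gt (t (k+1) - (a (k+1) - n)) (t k) with hcase | hcase
      · -- c n ≤ t k
        have hcn : cfun a t n ≤ t k := le_trans hcb (by omega)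
        have b1 : f (cfun a t n) ≤ f (t k) := by
          apply hm _ _ (Nat.cast_nonneg _)
          exact_mod_cast hcn
        have b2 : f (t k) ≤ 2 * f (g (a k)) := by
          rw [htk k hk_ge1]; exact hQ2
        have b4 : f (a k) ≤ f n := by
          apply hm _ _ (Nat.cast_nonneg _)
          exact_mod_cast hk1
        nlinarith [mul_le_mul_of_nonneg_left hQ3 (le_of_lt (half_pos hε)),
          mul_le_mul_of_nonneg_left b4 (le_of_lt (half_pos hε)), hfgk.le, hε.le]
      · -- ramp case
        have hcn : cfun a t n ≤ t (k+1) := le_trans hcb (by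
          have := htm k; omega)
        have b1 : f (cfun a t n) ≤ f (t (k+1)) := by
          apply hm _ _ (Nat.cast_nonneg _)
          exact_mod_cast hcn
        have b2 : f (t (k+1)) ≤ 2 * f (g (a (k+1))) := by
          rw [htk (k+1) (by omega)]; exact hQ2'
        have hta : t (k+1) ≤ a (k+1) := by have := hat k; omega
        have hmn : a (k+1) - t (k+1) ≤ n := by omega
        have hcast : ((a (k+1) - t (k+1) : ℕ):ℝ) = (a (k+1):ℝ) - (t (k+1):ℝ) := by
          push_cast [Nat.cast_sub hta]; ring
        have hsplit : f (a (k+1)) ≤ f ((a (k+1) - t (k+1) : ℕ)) + f (t (k+1)) := by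
          have hs := hsub ((a (k+1) - t (k+1) : ℕ):ℝ) ((t (k+1):ℕ):ℝ)
            (Nat.cast_nonneg _) (Nat.cast_nonneg _)
          have heq : ((a (k+1) - t (k+1) : ℕ):ℝ) + ((t (k+1):ℕ):ℝ) = ((a (k+1):ℕ):ℝ) := by
            rw [hcast]; ring
          rwa [heq] at hs
        have b4 : f ((a (k+1) - t (k+1) : ℕ)) ≤ f n := by
          apply hm _ _ (Nat.cast_nonneg _)
          exact_mod_cast hmn
        nlinarith [mul_le_mul_of_nonneg_left hQ3' (le_of_lt (half_pos hε)),
          mul_le_mul_of_nonneg_left b4 (le_of_lt (half_pos hε)), hfgk'.le, hε.le,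
          hnn _ (Nat.cast_nonneg (a (k+1) - t (k+1)))]
    have hratio : f (cfun a t n) / f n ≤ ε/2 := by
      rw [div_le_iff₀ hfn_pos]; linarith
    have habs : dist (f (cfun a t n) / f ((n:ℝ))) 0 = f (cfun a t n) / f n := by
      rw [dist_zero_right, Real.norm_eq_abs, abs_of_nonneg]
      exact div_nonneg (hnn _ (Nat.cast_nonneg _)) hfn_pos.le
    rw [habs]
    linarith
  -- A does not belong to Zd f g
  have hAnot : A ∉ Zd f g := by
    intro hA
    simp only [Zd, Set.mem_setOf_eq, hcnt] at hA
    have h1 : ∀ᶠ n : ℕ in atTop, f (cfun a t n) / f (g n) < 1 :=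
      hA.eventually (gt_mem_nhds one_pos)
    obtain ⟨N, hN⟩ := eventually_atTop.1 h1
    have hak : N ≤ a (max N 1) := le_trans (le_max_left _ _) (le_a hat (max N 1))
    have hhh := hN (a (max N 1)) hak
    rw [cfun_at hat htm (max N 1)] at hhh
    exact absurd hhh (by
      have hg1 : 0 < g (a (max N 1)) := hgapos (max N 1) (le_max_right _ _)
      have hfg : 0 < f (g (a (max N 1))) := modulus_pos hfmod hg1
      have : (1:ℝ) ≤ f (t (max N 1)) / f (g (a (max N 1))) :=
        (one_le_div hfg).2 (hm _ _ (hg0 _) (htk_ge (max N 1) (le_max_right _ _)))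
      linarith)
  exact (Set.ssubset_iff_of_subset hsubset).2 ⟨A, hAin, hAnot⟩
end

section
/- For every unbounded modulus function f there exists a weight function g (with g(n) → ∞ and n/g(n) ↛ 0) such that 𝒵(f) is a proper subset of 𝒵_g(f). -/
open Filter Set

theorem stmt6 (f : ℝ → ℝ) (hf : IsUnboundedModulus f) :
    ∃ g : ℕ → ℝ, IsWeight g ∧ Zd f (fun n => (n : ℝ)) ⊂ Zd f g := by
  classical
  obtain ⟨⟨hpos, hzero, hsub, hmono, _⟩, htop⟩ := hf
  have hfpos : ∀ x : ℝ, 0 < x → 0 < f x := fun x hx =>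
    lt_of_le_of_ne (hpos x hx.le) fun h => hx.ne' ((hzero x hx.le).mp h.symm)
  have htopN : Tendsto (fun n : ℕ => f n) atTop atTop :=
    htop.comp tendsto_natCast_atTop_atTop
  have hexS : ∀ k m : ℕ, ∃ n : ℕ, 2 * m < n ∧ ((k : ℝ) + 1) * f ((2 * m : ℕ)) ≤ f n := by
    intro k m
    obtain ⟨n, h2, h1⟩ :=
      ((eventually_gt_atTop (2 * m)).and
        (htopN.eventually_ge_atTop (((k : ℝ) + 1) * f ((2 * m : ℕ))))).exists
    exact ⟨n, h2, h1⟩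
  choose F hF1 hF2 using hexS
  set s : ℕ → ℕ := fun k => Nat.rec 1 (fun k ih => F k ih) k with hs_def
  have hsS : ∀ k, s (k + 1) = F k (s k) := fun k => rfl
  have hs1 : ∀ k, 1 ≤ s k := by
    intro k
    induction k with
    | zero => simp [hs_def]
    | succ k ih => have := hF1 k (s k); rw [hsS k]; omega
  have hsgrow : ∀ k, 2 * s k < s (k + 1) := by
    intro k; rw [hsS k]; exact hF1 k (s k)
  have hsmono : StrictMono s := by
    apply strictMono_nat_of_lt_succ
    intro k; have := hsgrow k; have := hs1 k; omega
  have hsf : ∀ k : ℕ, ((k : ℝ) + 1) * f ((2 * s k : ℕ)) ≤ f (s (k + 1)) := by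
    intro k; rw [hsS k]; exact hF2 k (s k)
  have hexM : ∀ n : ℕ, ∃ m : ℕ, n ≤ m ∧ (n : ℝ) * f n ≤ f m := by
    intro n
    obtain ⟨m, h1, h2⟩ :=
      ((eventually_ge_atTop n).and (htopN.eventually_ge_atTop ((n : ℝ) * f n))).exists
    exact ⟨m, h1, h2⟩
  choose M hM1 hM2 using hexM
  set g : ℕ → ℝ := fun n => if n ∈ Set.range s then (n : ℝ) else (M n : ℝ) with hg_def
  have hgn : ∀ n : ℕ, (n : ℝ) ≤ g n := by
    intro n
    by_cases h : n ∈ Set.range s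
    · simp only [hg_def, if_pos h]; exact le_refl _
    · simp only [hg_def, if_neg h]
      exact_mod_cast hM1 n
  have hg0 : ∀ n, 0 ≤ g n := fun n => le_trans (Nat.cast_nonneg n) (hgn n)
  have hfg : ∀ n : ℕ, f n ≤ f (g n) := fun n => hmono _ _ (Nat.cast_nonneg n) (hgn n)
  set A : Set ℕ := ⋃ k, Set.Ioc (s k) (2 * s k) with hA_def
  have hcnt_le : ∀ (B : Set ℕ) (n : ℕ), cnt B n ≤ n := by
    intro B n
    calc cnt B n ≤ (Finset.Icc 1 n).card := Finset.card_filter_le _ _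
    _ = n := by rw [Nat.card_Icc]; omega
  have hcnt_lower : ∀ k, s k ≤ cnt A (2 * s k) := by
    intro k
    have hsub' : Finset.Ioc (s k) (2 * s k) ⊆
        (Finset.Icc 1 (2 * s k)).filter (fun m => m ∈ A) := by
      intro m hm
      rw [Finset.mem_Ioc] at hm
      have h1 := hs1 k
      rw [Finset.mem_filter, Finset.mem_Icc]
      refine ⟨⟨by omega, hm.2⟩, ?_⟩
      exact Set.mem_iUnion.mpr ⟨k, hm.1, hm.2⟩
    have := Finset.card_le_card hsub'
    rw [Nat.card_Ioc] at this
    unfold cnt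
    omega
  have hcnt_upper : ∀ k, cnt A (s (k + 1)) ≤ 2 * s k := by
    intro k
    have hsub' : (Finset.Icc 1 (s (k + 1))).filter (fun m => m ∈ A) ⊆
        Finset.Icc 1 (2 * s k) := by
      intro m hm
      rw [Finset.mem_filter, Finset.mem_Icc] at hm
      obtain ⟨⟨h1, h2⟩, hmA⟩ := hm
      rw [Finset.mem_Icc]
      refine ⟨h1, ?_⟩
      obtain ⟨j, hj⟩ := Set.mem_iUnion.mp hmA
      rw [Set.mem_Ioc] at hj
      rcases le_or_gt j k with hjk | hjk
      · exact hj.2.trans (by have := hsmono.monotone hjk; omega)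
      · exfalso
        have : s (k + 1) ≤ s j := hsmono.monotone hjk
        omega
    calc cnt A (s (k + 1)) ≤ (Finset.Icc 1 (2 * s k)).card := Finset.card_le_card hsub'
    _ = 2 * s k := by rw [Nat.card_Icc]; omega
  refine ⟨g, ⟨hg0, ?_, ?_⟩, ?_, ?_⟩
  · -- g → ∞
    exact tendsto_atTop_mono hgn tendsto_natCast_atTop_atTop
  · -- n / g n ↛ 0
    intro h
    obtain ⟨N, hN⟩ := Metric.tendsto_atTop.mp h (1 / 2) (by norm_num)
    have hNs : N ≤ s N := hsmono.le_apply
    have hd := hN (s N) hNs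
    have hgs : g (s N) = (s N : ℝ) := by simp only [hg_def, if_pos (Set.mem_range_self N)]
    have hne : ((s N : ℕ) : ℝ) ≠ 0 := by
      have := hs1 N
      exact_mod_cast by omega
    rw [hgs, div_self hne] at hd
    rw [Real.dist_eq, sub_zero] at hd
    norm_num at hd
  · -- Zd f id ⊆ Zd f g
    intro B hB
    simp only [Zd, Set.mem_setOf_eq] at hB ⊢
    apply squeeze_zero_norm' _ hB
    filter_upwards [eventually_ge_atTop 1] with n hn
    have hfn : 0 < f n := hfpos _ (by exact_mod_cast hn)
    have hnum : 0 ≤ f (cnt B n) := hpos _ (Nat.cast_nonneg _)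
    rw [Real.norm_eq_abs, abs_of_nonneg (div_nonneg hnum (hpos _ (hg0 n)))]
    exact div_le_div_of_nonneg_left hnum hfn (hfg n)
  · -- ¬ Zd f g ⊆ Zd f id
    intro hsup
    have hAin : A ∈ Zd f g := by
      simp only [Zd, Set.mem_setOf_eq]
      rw [Metric.tendsto_atTop]
      intro ε hε
      obtain ⟨K, hK⟩ := exists_nat_one_div_lt hε
      refine ⟨max (s (K + 1) + 1) (K + 2), fun n hn => ?_⟩
      have hn1 : s (K + 1) + 1 ≤ n := le_trans (le_max_left _ _) hn
      have hn2 : K + 2 ≤ n := le_trans (le_max_right _ _) hn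
      have hratio_nonneg : 0 ≤ f (cnt A n) / f (g n) :=
        div_nonneg (hpos _ (Nat.cast_nonneg _)) (hpos _ (hg0 n))
      rw [Real.dist_eq, sub_zero, abs_of_nonneg hratio_nonneg]
      by_cases hns : n ∈ Set.range s
      · obtain ⟨k, rfl⟩ := hns
        have hkK : K + 1 < k := by
          by_contra hc
          push_neg at hc
          have := hsmono.monotone hc
          omega
        obtain ⟨j, rfl⟩ : ∃ j, k = j + 1 := ⟨k - 1, by omega⟩
        have hgsk : g (s (j + 1)) = (s (j + 1) : ℝ) := by
          simp only [hg_def, if_pos (Set.mem_range_self (j + 1))]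
        have hfden : 0 < f ((2 * s j : ℕ)) := by
          apply hfpos
          have := hs1 j
          exact_mod_cast by positivity
        have hfden2 : (0 : ℝ) < ((j : ℝ) + 1) * f ((2 * s j : ℕ)) := by
          have : (0:ℝ) < (j : ℝ) + 1 := by positivity
          positivity
        have h1 : f (cnt A (s (j + 1))) / f (g (s (j + 1))) ≤
            f ((2 * s j : ℕ)) / (((j : ℝ) + 1) * f ((2 * s j : ℕ))) := by
          rw [hgsk]
          apply div_le_div₀ (hpos _ (Nat.cast_nonneg _)) _ hfden2 (hsf j)
          exact hmono _ _ (Nat.cast_nonneg _) (by exact_mod_cast hcnt_upper j)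
        have h2 : f ((2 * s j : ℕ)) / (((j : ℝ) + 1) * f ((2 * s j : ℕ)))
            = 1 / ((j : ℝ) + 1) := by
          rw [mul_comm ((j:ℝ)+1), ← div_div, div_self hfden.ne']
        rw [h2] at h1
        refine lt_of_le_of_lt (h1.trans ?_) hK
        apply one_div_le_one_div_of_le (by positivity)
        have hKj : (K : ℝ) ≤ (j : ℝ) := by exact_mod_cast by omega
        linarith
      · have hgM : g n = (M n : ℝ) := by simp only [hg_def, if_neg hns]
        have hfn : 0 < f n := hfpos _ (by exact_mod_cast by omega : (0:ℝ) < n)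
        have hnfn : (0 : ℝ) < (n : ℝ) * f n := by
          have : (0:ℝ) < (n:ℝ) := by exact_mod_cast by omega
          positivity
        have h1 : f (cnt A n) / f (g n) ≤ f n / ((n : ℝ) * f n) := by
          rw [hgM]
          apply div_le_div₀ hfn.le _ hnfn (hM2 n)
          exact hmono _ _ (Nat.cast_nonneg _) (by exact_mod_cast hcnt_le A n)
        have h2 : f n / ((n : ℝ) * f n) = 1 / (n : ℝ) := by
          rw [mul_comm (n:ℝ), ← div_div, div_self hfn.ne']
        rw [h2] at h1
        refine lt_of_le_of_lt (h1.trans ?_) hK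
        apply one_div_le_one_div_of_le (by positivity)
        exact_mod_cast by omega
    have h : Tendsto (fun n => f (cnt A n) / f ((n : ℕ) : ℝ)) atTop (nhds 0) := hsup hAin
    obtain ⟨N, hN⟩ := Metric.tendsto_atTop.mp h (1 / 2) (by norm_num)
    have hNn : N ≤ 2 * s N := le_trans hsmono.le_apply (by omega)
    have hd := hN (2 * s N) hNn
    have hs1N := hs1 N
    have hfsN : 0 < f (s N) := hfpos _ (by exact_mod_cast by omega : (0:ℝ) < s N)
    have hsub2 : f ((2 * s N : ℕ)) ≤ 2 * f (s N) := by
      have := hsub (s N) (s N) (Nat.cast_nonneg _) (Nat.cast_nonneg _)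
      have hcast : ((2 * s N : ℕ) : ℝ) = (s N : ℝ) + (s N : ℝ) := by push_cast; ring
      rw [hcast]
      linarith
    have hf2sN : 0 < f ((2 * s N : ℕ)) :=
      hfpos _ (by exact_mod_cast by omega : (0:ℝ) < (2 * s N : ℕ))
    have hlow : (1 : ℝ) / 2 ≤ f (cnt A (2 * s N)) / f ((2 * s N : ℕ)) := by
      have hnum : f (s N) ≤ f (cnt A (2 * s N)) :=
        hmono _ _ (Nat.cast_nonneg _) (by exact_mod_cast hcnt_lower N)
      calc (1 : ℝ) / 2 = f (s N) / (2 * f (s N)) := by field_simp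
      _ ≤ f (cnt A (2 * s N)) / f ((2 * s N : ℕ)) :=
          div_le_div₀ (hpos _ (Nat.cast_nonneg _)) hnum (by positivity) hsub2
    rw [Real.dist_eq, sub_zero,
      abs_of_nonneg (div_nonneg (hpos _ (Nat.cast_nonneg _)) hf2sN.le)] at hd
    linarith
end

section
/- For every unbounded modulus function f there exists a weight function g such that 𝒵_g(f) and 𝒵(f) are incomparable: there exist sets A ∈ 𝒵_g(f) \ 𝒵(f) and B ∈ 𝒵(f) \ 𝒵_g(f). -/
open Filter Set

/-! ### Auxiliary lemmas -/

open scoped Classical in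
lemma cnt_mono (X : Set ℕ) : Monotone (cnt X) := by
  intro a b hab
  exact Finset.card_le_card (Finset.filter_subset_filter _ (Finset.Icc_subset_Icc_right hab))

open scoped Classical in
lemma cnt_le (X : Set ℕ) (n : ℕ) : cnt X n ≤ n := by
  calc cnt X n ≤ (Finset.Icc 1 n).card := Finset.card_filter_le _ _
  _ = n := by simp

open scoped Classical in
lemma cnt_le_add (X : Set ℕ) {a n : ℕ} (h : a ≤ n) : cnt X n ≤ cnt X a + (n - a) := by
  have hsub : (Finset.Icc 1 n).filter (fun m => m ∈ X) ⊆
      ((Finset.Icc 1 a).filter (fun m => m ∈ X)) ∪ Finset.Icc (a+1) n := by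
    intro m hm
    simp only [Finset.mem_filter, Finset.mem_Icc, Finset.mem_union] at *
    obtain ⟨⟨h1,h2⟩,h3⟩ := hm
    rcases le_or_gt m a with h4|h4
    · exact Or.inl ⟨⟨h1,h4⟩,h3⟩
    · exact Or.inr ⟨h4,h2⟩
  calc cnt X n ≤ _ := Finset.card_le_card hsub
  _ ≤ cnt X a + (Finset.Icc (a+1) n).card := Finset.card_union_le _ _
  _ ≤ cnt X a + (n - a) := by simp [Nat.card_Icc]

open scoped Classical in
lemma cnt_le_of_subset {X : Set ℕ} {a n : ℕ}
    (h : ∀ m, 1 ≤ m → m ≤ n → m ∈ X → m ≤ a) : cnt X n ≤ a := by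
  have hsub : (Finset.Icc 1 n).filter (fun m => m ∈ X) ⊆ Finset.Icc 1 a := by
    intro m hm
    simp only [Finset.mem_filter, Finset.mem_Icc] at *
    exact ⟨hm.1.1, h m hm.1.1 hm.1.2 hm.2⟩
  calc cnt X n ≤ (Finset.Icc 1 a).card := Finset.card_le_card hsub
  _ = a := by simp

open scoped Classical in
lemma cnt_ge_of_subset {X : Set ℕ} {a b n : ℕ} (hb : b ≤ n)
    (h : ∀ m, a < m → m ≤ b → m ∈ X) : b - a ≤ cnt X n := by
  have hsub : Finset.Icc (a+1) b ⊆ (Finset.Icc 1 n).filter (fun m => m ∈ X) := by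
    intro m hm
    simp only [Finset.mem_filter, Finset.mem_Icc] at *
    exact ⟨⟨by omega, by omega⟩, h m (by omega) hm.2⟩
  have := Finset.card_le_card hsub
  simpa [Nat.card_Icc, cnt] using this

open scoped Classical in
lemma cnt_le_of_gap {X : Set ℕ} {a b : ℕ} (hab : a ≤ b)
    (h : ∀ m, a < m → m ≤ b → m ∈ X → False) : cnt X b ≤ cnt X a := by
  apply Finset.card_le_card
  intro m hm
  simp only [Finset.mem_filter, Finset.mem_Icc] at *
  refine ⟨⟨hm.1.1, ?_⟩, hm.2⟩
  by_contra hc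
  exact h m (by omega) hm.1.2 hm.2

section Constr

variable (f : ℝ → ℝ) (hex : ∀ C : ℝ, ∃ m : ℕ, C ≤ f (m : ℝ))

/-- least `m : ℕ` with `C ≤ f m`. -/
noncomputable def nfind (C : ℝ) : ℕ := Nat.find (hex C)

lemma nfind_spec (C : ℝ) : C ≤ f (nfind f hex C) := Nat.find_spec (hex C)

lemma nfind_mono {C C' : ℝ} (h : C ≤ C') : nfind f hex C ≤ nfind f hex C' :=
  Nat.find_min' (hex C) (le_trans h (nfind_spec f hex C'))

lemma nfind_le {C : ℝ} {m : ℕ} (h : C ≤ f m) : nfind f hex C ≤ m :=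
  Nat.find_min' (hex C) h

/-- the block endpoints -/
noncomputable def seqn : ℕ → ℕ
  | 0 => 1
  | (k+1) => max (seqn k + nfind f hex (((k+1 : ℕ) : ℝ) * f (seqn k)) + (k+1))
       (nfind f hex (((k+1 : ℕ) : ℝ)^2 * f (nfind f hex (((k+1 : ℕ) : ℝ) * f (seqn k)))))

/-- the slow weights used at odd block endpoints -/
noncomputable def mseq (k : ℕ) : ℕ := nfind f hex ((k : ℝ) * f (seqn f hex (k-1)))

/-- the fast weights used inside blocks -/
noncomputable def Mseq (k : ℕ) : ℕ := nfind f hex ((k : ℝ) * f (seqn f hex k))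

lemma seqn_succ (k : ℕ) : seqn f hex (k+1) =
    max (seqn f hex k + mseq f hex (k+1) + (k+1))
      (nfind f hex (((k+1 : ℕ) : ℝ)^2 * f (mseq f hex (k+1)))) := by
  simp [seqn, mseq]

lemma seqn_succ_ge (k : ℕ) :
    seqn f hex k + mseq f hex (k+1) + (k+1) ≤ seqn f hex (k+1) := by
  rw [seqn_succ]; exact le_max_left _ _

lemma seqn_ge (k : ℕ) : k + 1 ≤ seqn f hex k := by
  induction k with
  | zero => simp [seqn]
  | succ k ih =>
    have := seqn_succ_ge f hex k
    omega

lemma seqn_pos (k : ℕ) : 1 ≤ seqn f hex k := by have := seqn_ge f hex k; omega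

lemma seqn_strictMono : StrictMono (seqn f hex) := by
  apply strictMono_nat_of_lt_succ
  intro k
  have := seqn_succ_ge f hex k
  omega

lemma seqn_mono : Monotone (seqn f hex) := (seqn_strictMono f hex).monotone

lemma mseq_le_seqn (k : ℕ) (hk : 1 ≤ k) : mseq f hex k ≤ seqn f hex k := by
  obtain ⟨j, rfl⟩ : ∃ j, k = j + 1 := ⟨k - 1, by omega⟩
  have := seqn_succ_ge f hex j
  omega

lemma sub_lt_seqn (k : ℕ) (hk : 1 ≤ k) :
    seqn f hex (k-1) + k ≤ seqn f hex k - mseq f hex k := by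
  obtain ⟨j, rfl⟩ : ∃ j, k = j + 1 := ⟨k - 1, by omega⟩
  have := seqn_succ_ge f hex j
  simp only [Nat.add_sub_cancel]
  omega

/-- the block index of `n` : least `k` with `n ≤ seqn k`. -/
noncomputable def Kb (n : ℕ) : ℕ :=
  Nat.find (⟨n, le_trans (Nat.le_succ n) (seqn_ge f hex n)⟩ : ∃ k, n ≤ seqn f hex k)

lemma Kb_spec (n : ℕ) : n ≤ seqn f hex (Kb f hex n) :=
  Nat.find_spec (⟨n, le_trans (Nat.le_succ n) (seqn_ge f hex n)⟩ : ∃ k, n ≤ seqn f hex k)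

lemma Kb_le {n k : ℕ} (h : n ≤ seqn f hex k) : Kb f hex n ≤ k := Nat.find_min' _ h

lemma Kb_min {n k : ℕ} (h : k < Kb f hex n) : seqn f hex k < n := by
  have := Nat.find_min (⟨n, le_trans (Nat.le_succ n) (seqn_ge f hex n)⟩ :
    ∃ k, n ≤ seqn f hex k) h
  omega

lemma Kb_eq {n k : ℕ} (h1 : seqn f hex (k-1) < n) (h2 : n ≤ seqn f hex k) (hk : 1 ≤ k) :
    Kb f hex n = k := by
  have h3 := Kb_le f hex h2
  by_contra hne
  have h4 : Kb f hex n ≤ k - 1 := by omega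
  have := le_trans (Kb_spec f hex n) (seqn_mono f hex h4)
  omega

lemma Kb_seqn (k : ℕ) : Kb f hex (seqn f hex k) = k := by
  rcases Nat.eq_zero_or_pos k with rfl | hk
  · have h := Kb_le f hex (le_refl (seqn f hex 0))
    omega
  · exact Kb_eq f hex (seqn_strictMono f hex (by omega)) le_rfl hk

lemma Kb_pos {n : ℕ} (h : 2 ≤ n) : 1 ≤ Kb f hex n := by
  by_contra hc
  have h0 : Kb f hex n = 0 := by omega
  have := Kb_spec f hex n
  rw [h0] at this
  simp [seqn] at this
  omega

lemma Kb_lower {n : ℕ} (h : 1 ≤ Kb f hex n) : seqn f hex (Kb f hex n - 1) < n :=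
  Kb_min f hex (by omega)

lemma Kb_tendsto : Tendsto (Kb f hex) atTop atTop := by
  rw [tendsto_atTop_atTop]
  intro b
  refine ⟨seqn f hex b + 1, fun n hn => ?_⟩
  by_contra hc
  push_neg at hc
  have h1 : n ≤ seqn f hex (Kb f hex n) := Kb_spec f hex n
  have h2 : seqn f hex (Kb f hex n) ≤ seqn f hex b := seqn_mono f hex (le_of_lt hc)
  omega

/-- the weight function -/
noncomputable def gfun (n : ℕ) : ℝ :=
  if n = seqn f hex (Kb f hex n) ∧ (Kb f hex n) % 2 = 1 then (mseq f hex (Kb f hex n) : ℝ)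
  else (Mseq f hex (Kb f hex n) : ℝ)

def Aset : Set ℕ := {n | 2 ≤ n ∧ (Kb f hex n) % 2 = 0}

def Bset : Set ℕ :=
  {n | (Kb f hex n) % 2 = 1 ∧ seqn f hex (Kb f hex n) - mseq f hex (Kb f hex n) < n}

lemma gfun_odd {k : ℕ} (hk : k % 2 = 1) :
    gfun f hex (seqn f hex k) = (mseq f hex k : ℝ) := by
  unfold gfun
  rw [Kb_seqn]
  rw [if_pos ⟨rfl, hk⟩]

lemma gfun_of_ne {n : ℕ} (h : ¬ (n = seqn f hex (Kb f hex n) ∧ (Kb f hex n) % 2 = 1)) :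
    gfun f hex n = (Mseq f hex (Kb f hex n) : ℝ) := by
  unfold gfun
  rw [if_neg h]

variable (hmono : ∀ a b : ℕ, a ≤ b → f a ≤ f b)
variable (hnn : ∀ a : ℕ, 0 ≤ f a)
variable (hpos : ∀ a : ℕ, 1 ≤ a → 0 < f a)
variable (hzero : f 0 = 0)

lemma f_mseq_ge (k : ℕ) : (k : ℝ) * f (seqn f hex (k-1)) ≤ f (mseq f hex k) :=
  nfind_spec f hex _

lemma f_Mseq_ge (k : ℕ) : (k : ℝ) * f (seqn f hex k) ≤ f (Mseq f hex k) :=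
  nfind_spec f hex _

include hmono in
lemma f_seqn_sq {k : ℕ} (hk : 1 ≤ k) :
    (k : ℝ)^2 * f (mseq f hex k) ≤ f (seqn f hex k) := by
  obtain ⟨j, rfl⟩ : ∃ j, k = j + 1 := ⟨k - 1, by omega⟩
  have h1 : nfind f hex (((j+1 : ℕ) : ℝ)^2 * f (mseq f hex (j+1))) ≤ seqn f hex (j+1) := by
    rw [seqn_succ]; exact le_max_right _ _
  calc ((j+1 : ℕ) : ℝ)^2 * f (mseq f hex (j+1)) ≤ f (nfind f hex _) := nfind_spec f hex _
  _ ≤ f (seqn f hex (j+1)) := hmono _ _ h1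

include hpos hzero in
lemma mseq_pos {k : ℕ} (hk : 1 ≤ k) : 1 ≤ mseq f hex k := by
  by_contra hc
  have h0 : mseq f hex k = 0 := by omega
  have h1 := f_mseq_ge f hex k
  rw [h0] at h1
  push_cast at h1
  rw [hzero] at h1
  have h2 : (0:ℝ) < (k : ℝ) * f (seqn f hex (k-1)) := by
    apply mul_pos (by exact_mod_cast hk) (hpos _ (seqn_pos f hex _))
  linarith

include hpos hzero in
lemma f_mseq_pos {k : ℕ} (hk : 1 ≤ k) : 0 < f (mseq f hex k) :=
  hpos _ (mseq_pos f hex hpos hzero hk)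

include hpos in
lemma f_Mseq_pos {k : ℕ} (hk : 1 ≤ k) : 0 < f (Mseq f hex k) := by
  have h1 := f_Mseq_ge f hex k
  have h2 : (0:ℝ) < (k : ℝ) * f (seqn f hex k) := by
    apply mul_pos (by exact_mod_cast hk) (hpos _ (seqn_pos f hex _))
  linarith

include hmono hnn in
lemma mseq_mono {j k : ℕ} (hj : j ≤ k) : mseq f hex j ≤ mseq f hex k := by
  apply nfind_mono
  apply mul_le_mul (by exact_mod_cast hj)
    (hmono _ _ (seqn_mono f hex (by omega))) (hnn _) (by positivity)

/-! ### Counting lemmas -/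

lemma cntA_odd {k : ℕ} (hk1 : 1 ≤ k) (hk : k % 2 = 1) :
    cnt (Aset f hex) (seqn f hex k) ≤ seqn f hex (k-1) := by
  apply cnt_le_of_subset
  intro m h1 h2 hm
  by_contra hc
  push_neg at hc
  have hKm : Kb f hex m = k := Kb_eq f hex hc h2 hk1
  have := hm.2
  rw [hKm] at this
  omega

lemma cntA_even {k : ℕ} (hk1 : 1 ≤ k) (hk : k % 2 = 0) :
    seqn f hex k - seqn f hex (k-1) ≤ cnt (Aset f hex) (seqn f hex k) := by
  apply cnt_ge_of_subset le_rfl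
  intro m h1 h2
  have hKm : Kb f hex m = k := Kb_eq f hex h1 h2 hk1
  have hs := seqn_pos f hex (k-1)
  exact ⟨by omega, by rw [hKm]; exact hk⟩

lemma cntB_zero : cnt (Bset f hex) (seqn f hex 0) = 0 := by
  have h : cnt (Bset f hex) (seqn f hex 0) ≤ 0 := by
    apply cnt_le_of_subset
    intro m h1 h2 hm
    have hs : seqn f hex 0 = 1 := by simp [seqn]
    rw [hs] at h2
    have hm1 : m = 1 := by omega
    have hK : Kb f hex m = 0 := by
      have := Kb_le f hex (show m ≤ seqn f hex 0 by omega)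
      omega
    have := hm.1
    rw [hK] at this
    omega
  omega

lemma cntB_gap {k : ℕ} (hk1 : 1 ≤ k) :
    cnt (Bset f hex) (seqn f hex k - mseq f hex k) ≤ cnt (Bset f hex) (seqn f hex (k-1)) := by
  have hab := sub_lt_seqn f hex k hk1
  apply cnt_le_of_gap (by omega)
  intro m h1 h2 hm
  have hKm : Kb f hex m = k := by
    apply Kb_eq f hex h1 _ hk1
    have := mseq_le_seqn f hex k hk1
    omega
  have := hm.2
  rw [hKm] at this
  omega

include hmono hnn in
lemma cntB_le (l : ℕ) : cnt (Bset f hex) (seqn f hex l) ≤ l * mseq f hex l := by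
  induction l with
  | zero => simp [cntB_zero]
  | succ l ih =>
    have h1 : cnt (Bset f hex) (seqn f hex (l+1)) ≤
        cnt (Bset f hex) (seqn f hex (l+1) - mseq f hex (l+1)) + mseq f hex (l+1) := by
      have hms := mseq_le_seqn f hex (l+1) (by omega)
      have := cnt_le_add (Bset f hex) (show seqn f hex (l+1) - mseq f hex (l+1) ≤ seqn f hex (l+1) by omega)
      omega
    have h2 := cntB_gap f hex (show 1 ≤ l + 1 by omega)
    simp only [Nat.add_sub_cancel] at h2
    have h3 : l * mseq f hex l ≤ l * mseq f hex (l+1) :=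
      Nat.mul_le_mul_left l (mseq_mono f hex hmono hnn (by omega))
    have h4 : (l+1) * mseq f hex (l+1) = l * mseq f hex (l+1) + mseq f hex (l+1) := by ring
    omega

lemma cntB_lower {k : ℕ} (hk1 : 1 ≤ k) (hk : k % 2 = 1) :
    mseq f hex k ≤ cnt (Bset f hex) (seqn f hex k) := by
  have hms := mseq_le_seqn f hex k hk1
  have hsub := sub_lt_seqn f hex k hk1
  have h := cnt_ge_of_subset (X := Bset f hex)
    (a := seqn f hex k - mseq f hex k) (b := seqn f hex k) le_rfl ?_
  · omega
  · intro m h1 h2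
    have hKm : Kb f hex m = k := Kb_eq f hex (by omega) h2 hk1
    exact ⟨by rw [hKm]; exact hk, by rw [hKm]; omega⟩

end Constr

theorem stmt8 (f : ℝ → ℝ) (hf : IsUnboundedModulus f) :
    ∃ g : ℕ → ℝ, IsWeight g ∧
      (∃ A : Set ℕ, A ∈ Zd f g ∧ A ∉ Zd f (fun n => (n : ℝ))) ∧
      (∃ B : Set ℕ, B ∈ Zd f (fun n => (n : ℝ)) ∧ B ∉ Zd f g) := by
  obtain ⟨⟨hnn', hiff, hsub, hmon, _⟩, htop⟩ := hf
  -- basic facts about `f` on naturals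
  have hex : ∀ C : ℝ, ∃ m : ℕ, C ≤ f (m : ℝ) := by
    intro C
    obtain ⟨x, hx1, hx2⟩ := ((htop.eventually_ge_atTop C).and (eventually_ge_atTop (0:ℝ))).exists
    exact ⟨⌈x⌉₊, le_trans hx1 (hmon _ _ hx2 (Nat.le_ceil x))⟩
  have hmono : ∀ a b : ℕ, a ≤ b → f a ≤ f b := fun a b h =>
    hmon _ _ (by positivity) (by exact_mod_cast h)
  have hnn : ∀ a : ℕ, 0 ≤ f a := fun a => hnn' _ (by positivity)
  have hzero : f 0 = 0 := (hiff 0 le_rfl).mpr rfl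
  have hpos : ∀ a : ℕ, 1 ≤ a → 0 < f a := by
    intro a ha
    rcases lt_or_eq_of_le (hnn a) with h | h
    · exact h
    · exfalso
      have := (hiff a (by positivity)).mp h.symm
      have : a = 0 := by exact_mod_cast this
      omega
  have hsubN : ∀ a b : ℕ, f ((a + b : ℕ) : ℝ) ≤ f a + f b := by
    intro a b
    push_cast
    exact hsub _ _ (by positivity) (by positivity)
  have hmulN : ∀ k m : ℕ, f ((k * m : ℕ) : ℝ) ≤ (k : ℝ) * f m := by
    intro k m
    induction k with
    | zero => simp [hzero]
    | succ k ih =>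
      have h1 : ((k+1) * m : ℕ) = (k * m + m : ℕ) := by ring
      rw [h1]
      calc f ((k * m + m : ℕ) : ℝ) ≤ f ((k*m : ℕ) : ℝ) + f m := hsubN _ _
      _ ≤ (k:ℝ) * f m + f m := by linarith
      _ = ((k+1 : ℕ):ℝ) * f m := by push_cast; ring
  have hsublow : ∀ a b : ℕ, b ≤ a → f a - f b ≤ f ((a - b : ℕ) : ℝ) := by
    intro a b hba
    have h1 : ((a - b) + b : ℕ) = a := by omega
    have := hsubN (a - b) b
    rw [h1] at this
    linarith
  have hf1 : 0 < f 1 := by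
    have := hpos 1 le_rfl
    simpa using this
  -- `f (gfun n)` is big
  have hgnat : ∀ n : ℕ, 1 ≤ Kb f hex n → ∃ gn : ℕ, gfun f hex n = (gn : ℝ) ∧
      (Kb f hex n : ℝ) * f 1 ≤ f gn := by
    intro n hKn
    by_cases hc : n = seqn f hex (Kb f hex n) ∧ (Kb f hex n) % 2 = 1
    · refine ⟨mseq f hex (Kb f hex n), by rw [gfun, if_pos hc], ?_⟩
      calc (Kb f hex n : ℝ) * f 1 ≤ (Kb f hex n : ℝ) * f (seqn f hex (Kb f hex n - 1)) := by
            have h1' : f 1 ≤ f (seqn f hex (Kb f hex n - 1)) := by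
              have := hmono 1 (seqn f hex (Kb f hex n - 1)) (seqn_pos f hex _)
              simpa using this
            exact mul_le_mul_of_nonneg_left h1' (by positivity)
      _ ≤ f (mseq f hex (Kb f hex n)) := f_mseq_ge f hex _
    · refine ⟨Mseq f hex (Kb f hex n), by rw [gfun, if_neg hc], ?_⟩
      calc (Kb f hex n : ℝ) * f 1 ≤ (Kb f hex n : ℝ) * f (seqn f hex (Kb f hex n)) := by
            have h1' : f 1 ≤ f (seqn f hex (Kb f hex n)) := by
              have := hmono 1 (seqn f hex (Kb f hex n)) (seqn_pos f hex _)
              simpa using this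
            exact mul_le_mul_of_nonneg_left h1' (by positivity)
      _ ≤ f (Mseq f hex (Kb f hex n)) := f_Mseq_ge f hex _
  have hgK : Tendsto (fun n => Kb f hex n) atTop atTop := Kb_tendsto f hex
  refine ⟨gfun f hex, ⟨?_, ?_, ?_⟩, ⟨Aset f hex, ?_, ?_⟩, ⟨Bset f hex, ?_, ?_⟩⟩
  · -- nonneg
    intro n
    rw [gfun]
    split <;> positivity
  · -- tendsto atTop
    rw [tendsto_atTop]
    intro b
    obtain ⟨K0, hK0⟩ := exists_nat_gt (f (⌈b⌉₊) / f 1)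
    have hK0' : f (⌈b⌉₊) < (K0 : ℝ) * f 1 := by
      rw [div_lt_iff₀ hf1] at hK0
      linarith
    filter_upwards [hgK.eventually_ge_atTop (max K0 1)] with n hn
    obtain ⟨gn, hg1, hg2⟩ := hgnat n (le_trans (le_max_right _ _) hn)
    rw [hg1]
    have h2 : f (⌈b⌉₊) < f gn := by
      have : (K0 : ℝ) ≤ (Kb f hex n : ℝ) := by exact_mod_cast le_trans (le_max_left _ _) hn
      nlinarith [hf1]
    have h3 : (⌈b⌉₊ : ℕ) < gn := by
      by_contra hc
      push_neg at hc
      exact absurd (hmono _ _ hc) (not_le.mpr h2)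
    calc b ≤ (⌈b⌉₊ : ℝ) := Nat.le_ceil b
    _ ≤ (gn : ℝ) := by exact_mod_cast le_of_lt h3
  · -- n / g n does not tend to 0
    intro h
    obtain ⟨N, hN⟩ := eventually_atTop.mp (h.eventually (eventually_lt_nhds one_pos))
    set k := 2 * N + 1 with hk
    have hodd : k % 2 = 1 := by omega
    have hn : N ≤ seqn f hex k := by
      have := seqn_ge f hex k
      omega
    have h1 := hN (seqn f hex k) hn
    rw [gfun_odd f hex hodd] at h1
    have hm1 : 1 ≤ mseq f hex k := mseq_pos f hex hpos hzero (by omega)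
    have hm2 : mseq f hex k ≤ seqn f hex k := mseq_le_seqn f hex k (by omega)
    have : (1:ℝ) ≤ (seqn f hex k : ℝ) / (mseq f hex k : ℝ) := by
      rw [le_div_iff₀ (by exact_mod_cast hm1)]
      simpa using (show (mseq f hex k : ℝ) ≤ (seqn f hex k : ℝ) by exact_mod_cast hm2)
    linarith
  · -- A ∈ Zd f g
    have hub : ∀ᶠ n : ℕ in atTop,
        f (cnt (Aset f hex) n) / f (gfun f hex n) ≤ 1 / (Kb f hex n : ℝ) := by
      filter_upwards [eventually_ge_atTop 2] with n hn2
      have hKn : 1 ≤ Kb f hex n := Kb_pos f hex hn2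
      have hKpos : (0:ℝ) < (Kb f hex n : ℝ) := by exact_mod_cast hKn
      have claim : f (cnt (Aset f hex) n) * (Kb f hex n : ℝ) ≤ f (gfun f hex n) ∧
          0 < f (gfun f hex n) := by
        by_cases hc : n = seqn f hex (Kb f hex n) ∧ (Kb f hex n) % 2 = 1
        · have hg : gfun f hex n = (mseq f hex (Kb f hex n) : ℝ) := by rw [gfun, if_pos hc]
          rw [hg]
          constructor
          · have h1 : cnt (Aset f hex) n ≤ seqn f hex (Kb f hex n - 1) := by
              have e : cnt (Aset f hex) n = cnt (Aset f hex) (seqn f hex (Kb f hex n)) := by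
                conv_lhs => rw [hc.1]
              rw [e]
              exact cntA_odd f hex hKn hc.2
            calc f (cnt (Aset f hex) n) * (Kb f hex n : ℝ) ≤
                f (seqn f hex (Kb f hex n - 1)) * (Kb f hex n : ℝ) := by
                  have := hmono _ _ h1
                  nlinarith
            _ ≤ f (mseq f hex (Kb f hex n)) := by
                  have := f_mseq_ge f hex (Kb f hex n)
                  linarith [mul_comm (f (seqn f hex (Kb f hex n - 1))) ((Kb f hex n : ℝ))]
          · exact f_mseq_pos f hex hpos hzero hKn
        · have hg : gfun f hex n = (Mseq f hex (Kb f hex n) : ℝ) := by rw [gfun, if_neg hc]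
          rw [hg]
          constructor
          · have h1 : cnt (Aset f hex) n ≤ seqn f hex (Kb f hex n) :=
              le_trans (cnt_le _ n) (Kb_spec f hex n)
            calc f (cnt (Aset f hex) n) * (Kb f hex n : ℝ) ≤
                f (seqn f hex (Kb f hex n)) * (Kb f hex n : ℝ) := by
                  have := hmono _ _ h1
                  nlinarith
            _ ≤ f (Mseq f hex (Kb f hex n)) := by
                  have := f_Mseq_ge f hex (Kb f hex n)
                  linarith [mul_comm (f (seqn f hex (Kb f hex n))) ((Kb f hex n : ℝ))]
          · exact f_Mseq_pos f hex hpos hKn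
      rw [div_le_div_iff₀ claim.2 hKpos]
      linarith [claim.1]
    have hlb : ∀ᶠ n : ℕ in atTop,
        (0:ℝ) ≤ f (cnt (Aset f hex) n) / f (gfun f hex n) := by
      filter_upwards with n
      apply div_nonneg (hnn _)
      apply hnn'
      rw [gfun]
      split <;> positivity
    have hupper : Tendsto (fun n : ℕ => 1 / (Kb f hex n : ℝ)) atTop (nhds 0) :=
      tendsto_one_div_atTop_nhds_zero_nat.comp hgK
    exact tendsto_of_tendsto_of_tendsto_of_le_of_le' tendsto_const_nhds hupper hlb hub
  · -- A ∉ Zd f id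
    intro h
    obtain ⟨N, hN⟩ := eventually_atTop.mp (h.eventually (eventually_lt_nhds one_half_pos))
    set k := 2 * (N + 1) with hk
    have hkeven : k % 2 = 0 := by omega
    have hk1 : 1 ≤ k := by omega
    set a := seqn f hex k with ha
    set b := seqn f hex (k - 1) with hb
    have hba : b ≤ a := seqn_mono f hex (by omega)
    have hNa : N ≤ a := by have := seqn_ge f hex k; omega
    have h1 := hN a hNa
    -- `f b` is at most half of `f a`
    have hfa : (k:ℝ)^2 * ((k:ℝ) * f b) ≤ f a := by
      calc (k:ℝ)^2 * ((k:ℝ) * f b) ≤ (k:ℝ)^2 * f (mseq f hex k) := by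
            have := f_mseq_ge f hex k
            have h0 : (0:ℝ) ≤ (k:ℝ)^2 := by positivity
            nlinarith
      _ ≤ f a := f_seqn_sq f hex hmono hk1
    have hfb2 : 2 * f b ≤ f a := by
      have hk2 : (2:ℝ) ≤ (k:ℝ) := by exact_mod_cast (by omega : 2 ≤ k)
      have h8 : (2:ℝ) ≤ (k:ℝ)^2 * (k:ℝ) := by nlinarith
      have h9 := mul_le_mul_of_nonneg_right h8 (hnn b)
      nlinarith
    have hfapos : 0 < f a := hpos _ (seqn_pos f hex _)
    -- count of A at a is at least a - b
    have hcnt : a - b ≤ cnt (Aset f hex) a := cntA_even f hex hk1 hkeven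
    have hcf : f a - f b ≤ f (cnt (Aset f hex) a) := by
      calc f a - f b ≤ f ((a - b : ℕ) : ℝ) := hsublow a b hba
      _ ≤ f (cnt (Aset f hex) a) := hmono _ _ hcnt
    have : (1:ℝ)/2 ≤ f (cnt (Aset f hex) a) / f a := by
      rw [le_div_iff₀ hfapos]
      linarith
    simp only at h1
    linarith
  · -- B ∈ Zd f id
    have hub : ∀ᶠ n : ℕ in atTop,
        f (cnt (Bset f hex) n) / f ((n:ℕ) : ℝ) ≤ 1 / ((Kb f hex n - 1 : ℕ) : ℝ) := by
      filter_upwards [eventually_gt_atTop (seqn f hex 1)] with n hn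
      have hKn : 2 ≤ Kb f hex n := by
        by_contra hc
        push_neg at hc
        have := le_trans (Kb_spec f hex n) (seqn_mono f hex (show Kb f hex n ≤ 1 by omega))
        omega
      set k := Kb f hex n with hkdef
      have hn1 : 1 ≤ n := by
        have := seqn_pos f hex 1
        omega
      have hfnpos : 0 < f ((n:ℕ):ℝ) := hpos _ hn1
      have hblock1 : seqn f hex (k - 1) < n := Kb_lower f hex (by omega)
      have hblock2 : n ≤ seqn f hex k := Kb_spec f hex n
      have hkm1 : (0:ℝ) < ((k - 1 : ℕ) : ℝ) := by
        have : 1 ≤ k - 1 := by omega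
        exact_mod_cast (by omega : 0 < k - 1)
      have claim : ((k - 1 : ℕ) : ℝ) * f (cnt (Bset f hex) n) ≤ f ((n:ℕ):ℝ) := by
        rcases le_or_gt n (seqn f hex k - mseq f hex k) with hcase | hcase
        · -- early part of the block
          have hc1 : cnt (Bset f hex) n ≤ (k-1) * mseq f hex (k-1) := by
            calc cnt (Bset f hex) n ≤ cnt (Bset f hex) (seqn f hex k - mseq f hex k) :=
                  cnt_mono _ hcase
            _ ≤ cnt (Bset f hex) (seqn f hex (k-1)) := cntB_gap f hex (by omega)
            _ ≤ (k-1) * mseq f hex (k-1) := cntB_le f hex hmono hnn _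
          have hc2 : f (cnt (Bset f hex) n) ≤ ((k-1:ℕ):ℝ) * f (mseq f hex (k-1)) :=
            le_trans (hmono _ _ hc1) (hmulN _ _)
          have hc3 : ((k-1:ℕ):ℝ)^2 * f (mseq f hex (k-1)) ≤ f (seqn f hex (k-1)) :=
            f_seqn_sq f hex hmono (by omega)
          have hc4 : f (seqn f hex (k-1)) ≤ f ((n:ℕ):ℝ) := hmono _ _ (by omega)
          nlinarith [hnn (cnt (Bset f hex) n), hnn (mseq f hex (k-1))]
        · -- late part of the block
          have hms := mseq_le_seqn f hex k (by omega)
          have hc1 : cnt (Bset f hex) n ≤ k * mseq f hex k := by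
            have e1 := cnt_le_add (Bset f hex)
              (show seqn f hex k - mseq f hex k ≤ n by omega)
            have e2 : cnt (Bset f hex) (seqn f hex k - mseq f hex k) ≤
                (k-1) * mseq f hex (k-1) :=
              le_trans (cntB_gap f hex (by omega)) (cntB_le f hex hmono hnn _)
            have e3 : mseq f hex (k-1) ≤ mseq f hex k := mseq_mono f hex hmono hnn (by omega)
            have e4 : n - (seqn f hex k - mseq f hex k) ≤ mseq f hex k := by omega
            have e5 : (k-1) * mseq f hex (k-1) + mseq f hex k ≤ k * mseq f hex k := by
              have := Nat.mul_le_mul_left (k-1) e3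
              have h7 : (k-1) * mseq f hex k + mseq f hex k = k * mseq f hex k := by
                have : k - 1 + 1 = k := by omega
                calc (k-1) * mseq f hex k + mseq f hex k = (k - 1 + 1) * mseq f hex k := by ring
                _ = k * mseq f hex k := by rw [this]
              omega
            omega
          have hc2 : f (cnt (Bset f hex) n) ≤ (k:ℝ) * f (mseq f hex k) :=
            le_trans (hmono _ _ hc1) (hmulN _ _)
          have hc3 : f (seqn f hex k) - f (mseq f hex k) ≤
              f ((seqn f hex k - mseq f hex k : ℕ) : ℝ) := hsublow _ _ hms
          have hc4 : f ((seqn f hex k - mseq f hex k : ℕ) : ℝ) ≤ f ((n:ℕ):ℝ) :=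
            hmono _ _ (by omega)
          have hc5 : (k:ℝ)^2 * f (mseq f hex k) ≤ f (seqn f hex k) :=
            f_seqn_sq f hex hmono (by omega)
          have hcast : ((k-1:ℕ):ℝ) = (k:ℝ) - 1 := by
            have : 1 ≤ k := by omega
            push_cast [this]
            ring
          rw [hcast]
          have hk2 : (2:ℝ) ≤ (k:ℝ) := by exact_mod_cast hKn
          nlinarith [hnn (cnt (Bset f hex) n), hnn (mseq f hex k)]
      rw [div_le_div_iff₀ hfnpos hkm1]
      linarith [claim]
    have hlb : ∀ᶠ n : ℕ in atTop,
        (0:ℝ) ≤ f (cnt (Bset f hex) n) / f ((n:ℕ) : ℝ) := by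
      filter_upwards with n
      exact div_nonneg (hnn _) (hnn _)
    have hupper : Tendsto (fun n : ℕ => 1 / ((Kb f hex n - 1 : ℕ) : ℝ)) atTop (nhds 0) := by
      have h1 : Tendsto (fun n : ℕ => Kb f hex n - 1) atTop atTop :=
        (tendsto_sub_atTop_nat 1).comp hgK
      exact tendsto_one_div_atTop_nhds_zero_nat.comp h1
    exact tendsto_of_tendsto_of_tendsto_of_le_of_le' tendsto_const_nhds hupper hlb hub
  · -- B ∉ Zd f g
    intro h
    obtain ⟨N, hN⟩ := eventually_atTop.mp (h.eventually (eventually_lt_nhds one_pos))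
    set k := 2 * N + 1 with hk
    have hodd : k % 2 = 1 := by omega
    have hn : N ≤ seqn f hex k := by have := seqn_ge f hex k; omega
    have h1 := hN (seqn f hex k) hn
    rw [gfun_odd f hex hodd] at h1
    have hc := cntB_lower f hex (by omega) hodd
    have hmp : 0 < f (mseq f hex k) := f_mseq_pos f hex hpos hzero (by omega)
    have : (1:ℝ) ≤ f (cnt (Bset f hex) (seqn f hex k)) / f (mseq f hex k) := by
      rw [le_div_iff₀ hmp]
      simpa using hmono _ _ hc
    linarith
end

section
/- For every unbounded modulus function f there exist weight functions g₁, g₂ such that 𝒵_{g₁}(f) ⊊ 𝒵(f) ⊊ 𝒵_{g₂}(f). -/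
open Filter Set

open scoped Classical in
/-- a natural number where `f` exceeds `C`. -/
noncomputable def big (f : ℝ → ℝ) (C : ℝ) : ℕ :=
  if h : ∃ m : ℕ, C ≤ f m then h.choose else 0

lemma big_spec {f : ℝ → ℝ} (hf : Tendsto f atTop atTop) (C : ℝ) : C ≤ f (big f C) := by
  have h : ∃ m : ℕ, C ≤ f m := by
    obtain ⟨x, hx⟩ := (tendsto_atTop.mp hf C).exists_forall_of_atTop
    exact ⟨⌈x⌉₊, hx _ (Nat.le_ceil x)⟩
  simpa [big, h] using h.choose_spec

noncomputable def Nfun (f : ℝ → ℝ) : ℕ → ℕ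
  | 0 => 1
  | (j+1) => max (Nfun f j + 1) (big f ((j+1 : ℕ) * (f ((j+2 : ℕ) : ℝ) + 1)))

noncomputable def pseq (f : ℝ → ℝ) : ℕ → ℕ × ℕ
  | 0 => (1, 1)
  | (k+1) =>
    let p := pseq f k
    let n := max (2 * p.1 + 1) (big f ((k+1 : ℕ) * (f (p.2 : ℝ) + 1)))
    (n, p.2 + n)

noncomputable def nseq (f : ℝ → ℝ) (k : ℕ) : ℕ := (pseq f k).1
noncomputable def Ssum (f : ℝ → ℝ) (k : ℕ) : ℕ := (pseq f k).2

open scoped Classical in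
noncomputable def gtwo (f : ℝ → ℝ) : ℕ → ℝ := fun n =>
  if ∃ k, nseq f k = n then (n : ℝ)
  else ((max (big f ((n : ℝ) * (f n + 1))) n : ℕ) : ℝ)

theorem stmt9 (f : ℝ → ℝ) (hf : IsUnboundedModulus f) :
    ∃ g₁ g₂ : ℕ → ℝ, IsWeight g₁ ∧ IsWeight g₂ ∧
      Zd f g₁ ⊂ Zd f (fun n => (n : ℝ)) ∧
      Zd f (fun n => (n : ℝ)) ⊂ Zd f g₂ := by
  classical
  obtain ⟨⟨hnn, hzero, hsubadd, hmono, _⟩, htop⟩ := hf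
  have f0 : f 0 = 0 := (hzero 0 le_rfl).mpr rfl
  have fpos : ∀ x : ℝ, 0 < x → 0 < f x := by
    intro x hx
    rcases lt_or_eq_of_le (hnn x hx.le) with h | h
    · exact h
    · exact absurd ((hzero x hx.le).mp h.symm) hx.ne'
  have fposn : ∀ n : ℕ, 1 ≤ n → 0 < f n := by
    intro n hn; exact fpos _ (by exact_mod_cast hn)
  have fmono_nat : ∀ m n : ℕ, m ≤ n → f m ≤ f n := by
    intro m n h; exact hmono _ _ (by positivity) (by exact_mod_cast h)
  -- general cnt facts
  have hcnt_le : ∀ (A : Set ℕ) (n : ℕ), cnt A n ≤ n := by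
    intro A n
    calc cnt A n ≤ (Finset.Icc 1 n).card := Finset.card_filter_le _ _
    _ = n := by simp [Nat.card_Icc]
  ------------------------------------------------------------------
  -- PART 1 : g₁
  ------------------------------------------------------------------
  set N := Nfun f with hN
  have hNsucc : ∀ j, N j + 1 ≤ N (j+1) := by
    intro j; exact le_max_left _ _
  have hNmono : StrictMono N := strictMono_nat_of_lt_succ (fun j => hNsucc j)
  have hN1 : ∀ j, 1 ≤ N j := by
    intro j
    have : N 0 ≤ N j := hNmono.monotone (Nat.zero_le j)
    simpa [hN, Nfun] using this
  have hNbig : ∀ j : ℕ, ((j : ℝ)) * (f ((j+1 : ℕ) : ℝ) + 1) ≤ f (N j) := by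
    intro j
    cases j with
    | zero => simpa using hnn _ (by positivity)
    | succ j =>
        have h1 : big f ((j+1 : ℕ) * (f ((j+2 : ℕ) : ℝ) + 1)) ≤ N (j+1) := le_max_right _ _
        have := fmono_nat _ _ h1
        have h2 := big_spec htop ((j+1 : ℕ) * (f ((j+2 : ℕ) : ℝ) + 1))
        calc ((j+1 : ℕ) : ℝ) * (f ((j+1+1 : ℕ) : ℝ) + 1)
            = ((j+1 : ℕ) : ℝ) * (f ((j+2 : ℕ) : ℝ) + 1) := by push_cast; ring_nf
          _ ≤ f (big f ((j+1 : ℕ) * (f ((j+2 : ℕ) : ℝ) + 1))) := h2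
          _ ≤ f (N (j+1)) := this
  set A₁ : Set ℕ := Set.range N with hA₁def
  have hcnt1_lb : ∀ b n : ℕ, N b ≤ n → b + 1 ≤ cnt A₁ n := by
    intro b n hbn
    have hsubset : (Finset.range (b+1)).image N ⊆
        (Finset.Icc 1 n).filter (fun m => m ∈ A₁) := by
      intro x hx
      simp only [Finset.mem_image, Finset.mem_range] at hx
      obtain ⟨j, hj, rfl⟩ := hx
      simp only [Finset.mem_filter, Finset.mem_Icc]
      exact ⟨⟨hN1 j, le_trans (hNmono.monotone (Nat.lt_succ_iff.mp hj)) hbn⟩, ⟨j, rfl⟩⟩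
    have := Finset.card_le_card hsubset
    rwa [Finset.card_image_of_injective _ hNmono.injective, Finset.card_range] at this
  have hcnt1_ub : ∀ n j : ℕ, j < cnt A₁ n → N j ≤ n := by
    intro n j hj
    by_contra hcon
    push_neg at hcon
    have hsubset : (Finset.Icc 1 n).filter (fun m => m ∈ A₁) ⊆
        (Finset.range j).image N := by
      intro x hx
      simp only [Finset.mem_filter, Finset.mem_Icc] at hx
      obtain ⟨⟨_, hxn⟩, i, rfl⟩ := hx
      simp only [Finset.mem_image, Finset.mem_range]
      exact ⟨i, hNmono.lt_iff_lt.mp (lt_of_le_of_lt hxn hcon), rfl⟩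
    have h2 := Finset.card_le_card hsubset
    rw [Finset.card_image_of_injective _ hNmono.injective, Finset.card_range] at h2
    have h3 : cnt A₁ n ≤ j := h2
    omega
  -- cnt A₁ tends to infinity
  have hcnt1_top : Tendsto (fun n => (cnt A₁ n : ℝ)) atTop atTop := by
    rw [tendsto_atTop]
    intro b
    filter_upwards [eventually_ge_atTop (N ⌈b⌉₊)] with n hn
    have : ⌈b⌉₊ + 1 ≤ cnt A₁ n := hcnt1_lb _ _ hn
    calc b ≤ (⌈b⌉₊ : ℝ) := Nat.le_ceil b
      _ ≤ (cnt A₁ n : ℝ) := by exact_mod_cast le_trans (Nat.le_succ _) this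
  set g₁ : ℕ → ℝ := fun n => (cnt A₁ n : ℝ) with hg₁def
  -- A₁ ∈ Z(f)
  have hA₁Z : A₁ ∈ Zd f (fun n => (n : ℝ)) := by
    apply squeeze_zero' (g := fun n => 2 / (cnt A₁ n : ℝ))
    · filter_upwards [eventually_ge_atTop 1] with n hn
      exact div_nonneg (hnn _ (by positivity)) (hnn _ (by positivity))
    · filter_upwards [eventually_ge_atTop (N 1)] with n hn
      have hc2 : 2 ≤ cnt A₁ n := hcnt1_lb 1 n hn
      obtain ⟨j, hj⟩ : ∃ j, cnt A₁ n = j + 1 := ⟨cnt A₁ n - 1, by omega⟩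
      have hj1 : 1 ≤ j := by omega
      have hNj : N j ≤ n := hcnt1_ub n j (by omega)
      have hfn1 : ((j : ℝ)) * (f ((j+1 : ℕ) : ℝ) + 1) ≤ f n :=
        le_trans (hNbig j) (fmono_nat _ _ hNj)
      have hposd : (0:ℝ) < (j : ℝ) * (f ((j+1 : ℕ) : ℝ) + 1) := by
        have h1 : (0:ℝ) < (j : ℝ) := by exact_mod_cast hj1
        have h2 : (0:ℝ) < f ((j+1 : ℕ) : ℝ) + 1 :=
          lt_of_lt_of_le one_pos (by nlinarith [hnn ((j+1 : ℕ) : ℝ) (by positivity)])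
        positivity
      rw [hj]
      have hfc_nn : 0 ≤ f ((j+1 : ℕ) : ℝ) := hnn _ (by positivity)
      calc f ((j+1 : ℕ) : ℝ) / f n
          ≤ f ((j+1 : ℕ) : ℝ) / ((j : ℝ) * (f ((j+1 : ℕ) : ℝ) + 1)) :=
            div_le_div_of_nonneg_left hfc_nn hposd hfn1
        _ ≤ 2 / ((j+1 : ℕ) : ℝ) := by
            have hj1R : (1:ℝ) ≤ (j:ℝ) := by exact_mod_cast hj1
            rw [div_le_div_iff₀ hposd (by positivity)]
            push_cast at hfc_nn ⊢
            nlinarith [mul_nonneg (sub_nonneg.mpr hj1R) hfc_nn, hj1R, hfc_nn]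
    · exact Tendsto.div_atTop tendsto_const_nhds hcnt1_top
  -- A₁ ∉ Zd f g₁
  have hA₁notin : A₁ ∉ Zd f g₁ := by
    intro h
    have heq : (fun n => f (cnt A₁ n) / f (g₁ n)) =ᶠ[atTop] (fun _ => (1:ℝ)) := by
      filter_upwards [eventually_ge_atTop (N 0)] with n hn
      have hc : 1 ≤ cnt A₁ n := by have := hcnt1_lb 0 n hn; omega
      simp only [hg₁def]
      exact div_self (ne_of_gt (fposn _ hc))
    have : Tendsto (fun _ : ℕ => (1:ℝ)) atTop (nhds 0) := h.congr' heq
    have := tendsto_nhds_unique this tendsto_const_nhds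
    norm_num at this
  -- Zd f g₁ ⊆ Zd f id
  have hsub1 : Zd f g₁ ⊆ Zd f (fun n => (n : ℝ)) := by
    intro B hB
    apply squeeze_zero' (g := fun n => f (cnt B n) / f (g₁ n)) _ _ hB
    · filter_upwards [eventually_ge_atTop 1] with n hn
      exact div_nonneg (hnn _ (by positivity)) (hnn _ (by positivity))
    · filter_upwards [eventually_ge_atTop (N 0)] with n hn
      have hc : 1 ≤ cnt A₁ n := by have := hcnt1_lb 0 n hn; omega
      have hle : f (g₁ n) ≤ f n := by
        simp only [hg₁def]; exact fmono_nat _ _ (hcnt_le A₁ n)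
      exact div_le_div_of_nonneg_left (hnn _ (by positivity)) (fposn _ hc) hle
  have hw1 : IsWeight g₁ := by
    refine ⟨fun n => by positivity, hcnt1_top, ?_⟩
    intro h
    obtain ⟨M, hM⟩ := Metric.tendsto_atTop.mp h 1 one_pos
    set n := max M (N 0) with hn
    have h1 := hM n (le_max_left _ _)
    have hc : 1 ≤ cnt A₁ n := by have := hcnt1_lb 0 n (le_max_right _ _); omega
    have hge : (1:ℝ) ≤ (n : ℝ) / g₁ n := by
      have h0 : (0:ℝ) < (cnt A₁ n : ℝ) := by exact_mod_cast hc
      have h2 : ((cnt A₁ n : ℕ) : ℝ) ≤ (n:ℝ) := by exact_mod_cast hcnt_le A₁ n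
      exact (one_le_div h0).mpr h2
    rw [Real.dist_eq, sub_zero] at h1
    have := le_abs_self ((n : ℝ) / g₁ n)
    linarith
  ------------------------------------------------------------------
  -- PART 2 : g₂
  ------------------------------------------------------------------
  have hn1 : ∀ k, 1 ≤ nseq f k := by
    intro k
    induction k with
    | zero => simp [nseq, pseq]
    | succ k ih =>
        have : 2 * nseq f k + 1 ≤ nseq f (k+1) := le_max_left _ _
        omega
  have hndouble : ∀ k, 2 * nseq f k + 1 ≤ nseq f (k+1) := by
    intro k; exact le_max_left _ _
  have hnmono : StrictMono (nseq f) := by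
    apply strictMono_nat_of_lt_succ
    intro k
    have := hndouble k
    omega
  have hSsucc : ∀ k, Ssum f (k+1) = Ssum f k + nseq f (k+1) := by
    intro k; rfl
  have hSsum_eq : ∀ k, ∑ j ∈ Finset.range (k+1), nseq f j = Ssum f k := by
    intro k
    induction k with
    | zero => simp [nseq, Ssum, pseq]
    | succ k ih => rw [Finset.sum_range_succ, ih, hSsucc]
  have hnbig : ∀ k : ℕ, ((k+1 : ℕ) : ℝ) * (f (Ssum f k) + 1) ≤ f (nseq f (k+1)) := by
    intro k
    have h1 : big f ((k+1 : ℕ) * (f (Ssum f k : ℝ) + 1)) ≤ nseq f (k+1) := le_max_right _ _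
    exact le_trans (big_spec htop _) (fmono_nat _ _ h1)
  set A₂ : Set ℕ := {m : ℕ | ∃ k, nseq f k < m ∧ m ≤ 2 * nseq f k} with hA₂def
  have hcnt2_ub : ∀ k, cnt A₂ (nseq f (k+1)) ≤ Ssum f k := by
    intro k
    have hsubset : (Finset.Icc 1 (nseq f (k+1))).filter (fun m => m ∈ A₂) ⊆
        (Finset.range (k+1)).biUnion (fun j => Finset.Ioc (nseq f j) (2 * nseq f j)) := by
      intro x hx
      simp only [Finset.mem_filter, Finset.mem_Icc, hA₂def, Set.mem_setOf_eq] at hx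
      obtain ⟨⟨_, hxn⟩, j, hj1, hj2⟩ := hx
      simp only [Finset.mem_biUnion, Finset.mem_range, Finset.mem_Ioc]
      refine ⟨j, ?_, hj1, hj2⟩
      exact hnmono.lt_iff_lt.mp (lt_of_lt_of_le hj1 hxn)
    calc cnt A₂ (nseq f (k+1)) ≤ _ := Finset.card_le_card hsubset
      _ ≤ ∑ j ∈ Finset.range (k+1), (Finset.Ioc (nseq f j) (2 * nseq f j)).card :=
          Finset.card_biUnion_le
      _ = ∑ j ∈ Finset.range (k+1), nseq f j := by
          apply Finset.sum_congr rfl; intro j _; rw [Nat.card_Ioc]; omega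
      _ = Ssum f k := hSsum_eq k
  have hcnt2_lb : ∀ k, nseq f k ≤ cnt A₂ (2 * nseq f k) := by
    intro k
    have hsubset : Finset.Ioc (nseq f k) (2 * nseq f k) ⊆
        (Finset.Icc 1 (2 * nseq f k)).filter (fun m => m ∈ A₂) := by
      intro x hx
      simp only [Finset.mem_Ioc] at hx
      simp only [Finset.mem_filter, Finset.mem_Icc, hA₂def, Set.mem_setOf_eq]
      have := hn1 k
      exact ⟨⟨by omega, hx.2⟩, k, hx.1, hx.2⟩
    have h2 := Finset.card_le_card hsubset
    rw [Nat.card_Ioc] at h2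
    have h3 : 2 * nseq f k - nseq f k ≤ cnt A₂ (2 * nseq f k) := h2
    have := hn1 k
    omega
  set g₂ : ℕ → ℝ := gtwo f with hg₂def
  have hg2_at : ∀ k, g₂ (nseq f k) = (nseq f k : ℝ) := by
    intro k; simp only [hg₂def, gtwo]; rw [if_pos ⟨k, rfl⟩]
  have hg2_ge : ∀ n : ℕ, (n : ℝ) ≤ g₂ n := by
    intro n
    simp only [hg₂def, gtwo]
    split
    · exact le_rfl
    · exact_mod_cast le_max_right _ n
  have hg2_else : ∀ n : ℕ, ¬(∃ k, nseq f k = n) → (n : ℝ) * (f n + 1) ≤ f (g₂ n) := by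
    intro n hn
    simp only [hg₂def, gtwo, if_neg hn]
    exact le_trans (big_spec htop _) (fmono_nat _ _ (le_max_left _ _))
  -- A₂ ∉ Zd f id
  have hA₂notin : A₂ ∉ Zd f (fun n => (n : ℝ)) := by
    intro h
    obtain ⟨M, hM⟩ := Metric.tendsto_atTop.mp h (1/2) (by norm_num)
    have hMn : M ≤ 2 * nseq f M := le_trans hnmono.le_apply (by omega)
    have h1 := hM (2 * nseq f M) hMn
    rw [Real.dist_eq, sub_zero] at h1
    set m := nseq f M with hm
    have hm1 : 1 ≤ m := hn1 M
    have hfm : 0 < f m := fposn _ hm1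
    have hf2m : f ((2 * m : ℕ) : ℝ) ≤ 2 * f m := by
      have := hsubadd m m (by positivity) (by positivity)
      calc f ((2 * m : ℕ) : ℝ) = f ((m : ℝ) + m) := by push_cast; ring_nf
        _ ≤ f m + f m := this
        _ = 2 * f m := by ring
    have hf2m_pos : 0 < f ((2 * m : ℕ) : ℝ) := fposn _ (by omega)
    have hnum : f m ≤ f (cnt A₂ (2 * m)) := fmono_nat _ _ (hcnt2_lb M)
    have : (1:ℝ)/2 ≤ f (cnt A₂ (2 * m)) / f ((2 * m : ℕ) : ℝ) := by
      rw [div_le_div_iff₀ (by norm_num) hf2m_pos]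
      nlinarith
    have habs := le_abs_self (f (cnt A₂ (2 * m)) / f ((2 * m : ℕ) : ℝ))
    linarith
  -- A₂ ∈ Zd f g₂
  have hA₂in : A₂ ∈ Zd f g₂ := by
    show Tendsto (fun n => f (cnt A₂ n) / f (g₂ n)) atTop (nhds 0)
    rw [Metric.tendsto_atTop]
    intro ε hε
    obtain ⟨K0, hK0⟩ := exists_nat_one_div_lt hε
    set K := K0 + 1 with hK
    have hKpos : 1 ≤ K := by omega
    have hKε : 1 / (K : ℝ) < ε := by exact_mod_cast hK0
    refine ⟨max (nseq f K) K, ?_⟩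
    intro n hn
    have hnK : K ≤ n := le_trans (le_max_right _ _) hn
    have hn1' : 1 ≤ n := le_trans hKpos hnK
    have hgpos : 0 < f (g₂ n) :=
      fpos _ (lt_of_lt_of_le (by exact_mod_cast hn1' : (0:ℝ) < (n:ℝ)) (hg2_ge n))
    have hratio_nn : 0 ≤ f (cnt A₂ n) / f (g₂ n) :=
      div_nonneg (hnn _ (by positivity)) hgpos.le
    rw [Real.dist_eq, sub_zero, abs_of_nonneg hratio_nn]
    by_cases hx : ∃ k, nseq f k = n
    · obtain ⟨k, rfl⟩ := hx
      have hkK : K ≤ k := hnmono.le_iff_le.mp (le_trans (le_max_left _ _) hn)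
      obtain ⟨j, rfl⟩ : ∃ j, k = j + 1 := ⟨k - 1, by omega⟩
      have hup : f (cnt A₂ (nseq f (j+1))) ≤ f (Ssum f j) := fmono_nat _ _ (hcnt2_ub j)
      have hlow : ((j+1 : ℕ) : ℝ) * (f (Ssum f j) + 1) ≤ f (nseq f (j+1)) := hnbig j
      have hS_nn : 0 ≤ f (Ssum f j) := hnn _ (by positivity)
      have hdpos : (0:ℝ) < ((j+1 : ℕ) : ℝ) * (f (Ssum f j) + 1) := by positivity
      rw [hg2_at (j+1)]
      calc f (cnt A₂ (nseq f (j+1))) / f ((nseq f (j+1) : ℕ) : ℝ)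
          ≤ f (Ssum f j) / (((j+1 : ℕ) : ℝ) * (f (Ssum f j) + 1)) := by
            apply div_le_div₀ hS_nn hup hdpos hlow
        _ ≤ 1 / ((j+1 : ℕ) : ℝ) := by
            rw [div_le_div_iff₀ hdpos (by positivity)]
            nlinarith [hS_nn]
        _ ≤ 1 / (K : ℝ) := by
            apply div_le_div_of_nonneg_left zero_le_one (by exact_mod_cast hKpos)
            exact_mod_cast by omega
        _ < ε := hKε
    · have hlow := hg2_else n hx
      have hfn_nn : 0 ≤ f n := hnn _ (by positivity)
      have hdpos : (0:ℝ) < (n : ℝ) * (f n + 1) := by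
        have : (0:ℝ) < (n:ℝ) := by exact_mod_cast hn1'
        positivity
      calc f (cnt A₂ n) / f (g₂ n)
          ≤ f n / ((n : ℝ) * (f n + 1)) :=
            div_le_div₀ hfn_nn (fmono_nat _ _ (hcnt_le A₂ n)) hdpos hlow
        _ ≤ 1 / (n : ℝ) := by
            rw [div_le_div_iff₀ hdpos (by positivity)]
            nlinarith [hfn_nn]
        _ ≤ 1 / (K : ℝ) := by
            apply div_le_div_of_nonneg_left zero_le_one (by exact_mod_cast hKpos)
            exact_mod_cast hnK
        _ < ε := hKε
  -- Zd f id ⊆ Zd f g₂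
  have hsub2 : Zd f (fun n => (n : ℝ)) ⊆ Zd f g₂ := by
    intro B hB
    apply squeeze_zero' (g := fun n => f (cnt B n) / f ((n : ℕ) : ℝ)) _ _ hB
    · filter_upwards [eventually_ge_atTop 1] with n hn
      have hgpos : 0 < f (g₂ n) :=
        fpos _ (lt_of_lt_of_le (by exact_mod_cast hn : (0:ℝ) < (n:ℝ)) (hg2_ge n))
      exact div_nonneg (hnn _ (by positivity)) hgpos.le
    · filter_upwards [eventually_ge_atTop 1] with n hn
      have hle : f ((n:ℕ):ℝ) ≤ f (g₂ n) := hmono _ _ (by positivity) (hg2_ge n)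
      exact div_le_div_of_nonneg_left (hnn _ (by positivity)) (fposn _ hn) hle
  have hw2 : IsWeight g₂ := by
    refine ⟨?_, ?_, ?_⟩
    · intro n; exact le_trans (by positivity) (hg2_ge n)
    · exact tendsto_atTop_mono hg2_ge tendsto_natCast_atTop_atTop
    · intro h
      obtain ⟨M, hM⟩ := Metric.tendsto_atTop.mp h 1 one_pos
      have h1 := hM (nseq f M) hnmono.le_apply
      rw [Real.dist_eq, sub_zero, hg2_at M] at h1
      have : ((nseq f M : ℕ) : ℝ) / ((nseq f M : ℕ) : ℝ) = 1 := by
        apply div_self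
        have := hn1 M
        positivity
      rw [this] at h1
      norm_num at h1
  exact ⟨g₁, g₂, hw1, hw2,
    ⟨hsub1, fun hge => hA₁notin (hge hA₁Z)⟩,
    ⟨hsub2, fun hge => hA₂notin (hge hA₂in)⟩⟩
end

section
/- Let (a_n) be an arithmetic sequence (a₀ = 1, a_n strictly increasing, a_n | a_{n+1}, with ratios q_n = a_n/a_{n-1} ≥ 2) and x ∈ 𝕋 with d^f_g(supp(x)) = 0. Then x ∈ t^{f,g}_{(a_n)}(𝕋), i.e. ‖a_n x‖ → 0 f^g-statistically. -/
open Filter Set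

/-- The `f^g`-statistically characterized subgroup `t^{f,g}_{(a_n)}(𝕋)`. -/
noncomputable def statChar (f : ℝ → ℝ) (g : ℕ → ℝ) (a : ℕ → ℤ) :
    Set (AddCircle (1 : ℝ)) :=
  {x | ∀ ε > 0, {n : ℕ | ε ≤ ‖(a n) • x‖} ∈ Zd f g}

/-- An arithmetic sequence: `a 0 = 1`, strictly increasing, `a n ∣ a (n+1)`,
and all ratios `q_n ≥ 2`. -/
def IsArith (a : ℕ → ℕ) : Prop :=
  a 0 = 1 ∧ StrictMono a ∧ (∀ n, a n ∣ a (n + 1)) ∧ (∀ n, 2 * a n ≤ a (n + 1))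

/-- Canonical representation `x = Σ_{n≥1} c_n / a_n` with `0 ≤ c_n ≤ q_n - 1`
and `c_n < q_n - 1` infinitely often; here `q_n = a n / a (n-1)`. -/
def IsCanonRep (a : ℕ → ℕ) (c : ℕ → ℕ) (x : AddCircle (1 : ℝ)) : Prop :=
  c 0 = 0 ∧ (∀ n, 1 ≤ n → c n ≤ a n / a (n - 1) - 1) ∧
  (∀ N, ∃ n, N ≤ n ∧ c n < a n / a (n - 1) - 1) ∧
  x = ((∑' n, (c n : ℝ) / (a n : ℝ) : ℝ) : AddCircle (1 : ℝ))

lemma cnt_mono_s11 {A B : Set ℕ} (h : A ⊆ B) (n : ℕ) : cnt A n ≤ cnt B n := by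
  classical
  apply Finset.card_le_card
  intro m hm
  simp only [Finset.mem_filter] at hm ⊢
  exact ⟨hm.1, h hm.2⟩

lemma zd_squeeze (f : ℝ → ℝ) (hf : IsUnboundedModulus f) (g : ℕ → ℝ) (hg : IsWeight g)
    {A B : Set ℕ} (k : ℕ) (h : ∀ n, cnt A n ≤ cnt B n + k) (hB : B ∈ Zd f g) : A ∈ Zd f g := by
  obtain ⟨⟨hpos, hzero, hsub, hmon, _⟩, htop⟩ := hf
  have hfg : Tendsto (fun n => f (g n)) atTop atTop := htop.comp hg.2.1
  have hev : ∀ᶠ n in atTop, 1 ≤ f (g n) := hfg.eventually_ge_atTop 1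
  have h2 : Tendsto (fun n => f (k : ℕ) / f (g n)) atTop (nhds 0) := by
    simpa [div_eq_mul_inv] using (tendsto_inv_atTop_zero.comp hfg).const_mul (f (k:ℕ))
  have hlim : Tendsto (fun n => f (cnt B n) / f (g n) + f (k:ℕ) / f (g n)) atTop (nhds 0) := by
    simpa using hB.add h2
  refine squeeze_zero' ?_ ?_ hlim
  · filter_upwards [hev] with n hn
    exact div_nonneg (hpos _ (Nat.cast_nonneg _)) (le_trans zero_le_one hn)
  · filter_upwards [hev] with n hn
    have hc : (0:ℝ) < f (g n) := lt_of_lt_of_le one_pos hn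
    have h1 : f (cnt A n) ≤ f (cnt B n) + f (k:ℕ) := by
      calc f (cnt A n) ≤ f ((cnt B n + k : ℕ) : ℝ) :=
            hmon _ _ (Nat.cast_nonneg _) (by exact_mod_cast h n)
        _ ≤ f (cnt B n) + f (k:ℕ) := by
            push_cast
            exact hsub _ _ (Nat.cast_nonneg _) (Nat.cast_nonneg _)
    calc f (cnt A n) / f (g n) ≤ (f (cnt B n) + f (k:ℕ)) / f (g n) := by gcongr
      _ = _ := add_div _ _ _

lemma zd_union (f : ℝ → ℝ) (hf : IsUnboundedModulus f) (g : ℕ → ℝ) (hg : IsWeight g)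
    {A B : Set ℕ} (hA : A ∈ Zd f g) (hB : B ∈ Zd f g) : A ∪ B ∈ Zd f g := by
  obtain ⟨⟨hpos, hzero, hsub, hmon, _⟩, htop⟩ := hf
  have hfg : Tendsto (fun n => f (g n)) atTop atTop := htop.comp hg.2.1
  have hev : ∀ᶠ n in atTop, 1 ≤ f (g n) := hfg.eventually_ge_atTop 1
  have hlim : Tendsto (fun n => f (cnt A n) / f (g n) + f (cnt B n) / f (g n)) atTop (nhds 0) := by
    simpa using hA.add hB
  refine squeeze_zero' ?_ ?_ hlim
  · filter_upwards [hev] with n hn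
    exact div_nonneg (hpos _ (Nat.cast_nonneg _)) (le_trans zero_le_one hn)
  · filter_upwards [hev] with n hn
    have hcnt : cnt (A ∪ B) n ≤ cnt A n + cnt B n := by
      classical
      calc cnt (A ∪ B) n
          ≤ (((Finset.Icc 1 n).filter (fun m => m ∈ A)) ∪
              ((Finset.Icc 1 n).filter (fun m => m ∈ B))).card := by
            apply Finset.card_le_card
            intro m hm
            simp only [cnt, Finset.mem_filter, Finset.mem_union, Set.mem_union] at hm ⊢
            tauto
        _ ≤ cnt A n + cnt B n := by
            simpa [cnt] using Finset.card_union_le _ _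
    have h1 : f (cnt (A ∪ B) n) ≤ f (cnt A n) + f (cnt B n) := by
      calc f (cnt (A ∪ B) n) ≤ f ((cnt A n + cnt B n : ℕ) : ℝ) :=
            hmon _ _ (Nat.cast_nonneg _) (by exact_mod_cast hcnt)
        _ ≤ _ := by push_cast; exact hsub _ _ (Nat.cast_nonneg _) (Nat.cast_nonneg _)
    calc f (cnt (A ∪ B) n) / f (g n) ≤ (f (cnt A n) + f (cnt B n)) / f (g n) := by
          gcongr
      _ = _ := add_div _ _ _

lemma cnt_shift (c : ℕ → ℕ) (j n : ℕ) :
    cnt {m | c (m + j) ≠ 0} n ≤ cnt {m | c m ≠ 0} n + (j + 1) := by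
  classical
  have h1 : cnt {m | c (m + j) ≠ 0} n ≤ ((Finset.Icc 1 (n + j)).filter (fun m => c m ≠ 0)).card := by
    apply Finset.card_le_card_of_injOn (fun m => m + j)
    · intro m hm
      simp only [cnt, Finset.mem_coe, Finset.mem_filter, Finset.mem_Icc, Set.mem_setOf_eq] at hm ⊢
      omega
    · intro x _ y _ hxy; simp only at hxy; omega
  have h2 : ((Finset.Icc 1 (n + j)).filter (fun m => c m ≠ 0)).card
      ≤ cnt {m | c m ≠ 0} n + (j + 1) := by
    calc ((Finset.Icc 1 (n + j)).filter (fun m => c m ≠ 0)).card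
        ≤ (((Finset.Icc 1 n).filter (fun m => m ∈ {m | c m ≠ 0})) ∪ Finset.Icc (n+1) (n+j)).card := by
          apply Finset.card_le_card
          intro m hm
          simp only [Finset.mem_filter, Finset.mem_Icc, Finset.mem_union, Set.mem_setOf_eq] at hm ⊢
          omega
      _ ≤ ((Finset.Icc 1 n).filter (fun m => m ∈ {m | c m ≠ 0})).card
            + (Finset.Icc (n+1) (n+j)).card :=
          Finset.card_union_le _ _
      _ ≤ cnt {m | c m ≠ 0} n + (j + 1) := by
          have he : ((Finset.Icc 1 n).filter (fun m => m ∈ {m | c m ≠ 0})).card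
              = cnt {m | c m ≠ 0} n := by simp [cnt]
          rw [he, Nat.card_Icc]; omega
  exact le_trans h1 h2
theorem stmt11 (f : ℝ → ℝ) (hf : IsUnboundedModulus f) (g : ℕ → ℝ) (hg : IsWeight g)
    (a : ℕ → ℕ) (ha : IsArith a) (x : AddCircle (1 : ℝ)) (c : ℕ → ℕ)
    (hx : IsCanonRep a c x) (hsupp : {n | c n ≠ 0} ∈ Zd f g) :
    x ∈ statChar f g (fun n => (a n : ℤ)) := by
  obtain ⟨ha0, hsm, hdvd, hq⟩ := ha
  obtain ⟨hc0, hcle, -, hxeq⟩ := hx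
  have hapos : ∀ n, 0 < a n := by
    intro n; have h := hsm.monotone (Nat.zero_le n); omega
  have hdvd_le : ∀ k n, k ≤ n → a k ∣ a n := by
    intro k n hkn
    induction n with
    | zero => have : k = 0 := by omega
              subst this; exact dvd_refl _
    | succ n ih =>
      rcases Nat.lt_or_ge k (n+1) with h|h
      · exact (ih (by omega)).trans (hdvd n)
      · have : k = n+1 := by omega
        subst this; exact dvd_refl _
  have hgrow : ∀ n q, 2^q * a n ≤ a (n + q) := by
    intro n q
    induction q with
    | zero => simp
    | succ q ih =>
      have h := hq (n + q)
      calc 2^(q+1) * a n = 2 * (2^q * a n) := by ring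
        _ ≤ 2 * a (n+q) := by omega
        _ ≤ a (n+q+1) := h
  have h2n : ∀ n, 2^n ≤ a n := by
    intro n; have := hgrow 0 n; simpa [ha0] using this
  set F : ℕ → ℝ := fun j => (c j : ℝ) / (a j : ℝ) with hF
  have hFnn : ∀ j, 0 ≤ F j := fun j => div_nonneg (Nat.cast_nonneg _) (Nat.cast_nonneg _)
  have hkeyN : ∀ j, 1 ≤ j → c j * a (j-1) + a (j-1) ≤ a j := by
    intro j hj
    have h1 := hcle j hj
    have h2 : a (j-1) ∣ a j := by
      have h := hdvd (j-1); rwa [Nat.sub_add_cancel hj] at h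
    have h3 : a j / a (j-1) * a (j-1) = a j := Nat.div_mul_cancel h2
    have h4 : 1 ≤ a j / a (j-1) :=
      (Nat.one_le_div_iff (hapos _)).2 (hsm.monotone (by omega))
    have h5 : (c j + 1) * a (j-1) ≤ (a j / a (j-1)) * a (j-1) :=
      Nat.mul_le_mul_right _ (by omega)
    rw [add_mul, one_mul, h3] at h5
    exact h5
  have hterm : ∀ j, 1 ≤ j → F j ≤ 1 / (a (j-1) : ℝ) := by
    intro j hj
    have hpj : (0:ℝ) < a j := by exact_mod_cast hapos j
    have hpj1 : (0:ℝ) < a (j-1) := by exact_mod_cast hapos (j-1)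
    rw [hF]
    rw [div_le_div_iff₀ hpj hpj1]
    have h := le_trans (Nat.le_add_right (c j * a (j-1)) (a (j-1))) (hkeyN j hj)
    rw [one_mul]
    exact_mod_cast h
  have hbound : ∀ j, F j ≤ 2 * (1/2:ℝ)^j := by
    intro j
    rcases Nat.eq_zero_or_pos j with h|h
    · subst h
      have h0 : F 0 = 0 := by simp [hF, hc0]
      rw [h0]; positivity
    · obtain ⟨i, rfl⟩ : ∃ i, j = i + 1 := ⟨j - 1, by omega⟩
      have h1 := hterm (i+1) (by omega)
      simp only [Nat.add_sub_cancel] at h1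
      have h2 : (2:ℝ)^i ≤ a i := by exact_mod_cast h2n i
      have h3 : (1:ℝ) / a i ≤ 1 / 2^i := by
        apply one_div_le_one_div_of_le (by positivity) h2
      calc F (i+1) ≤ 1 / (a i : ℝ) := h1
        _ ≤ 1 / 2^i := h3
        _ = 2 * (1/2:ℝ)^(i+1) := by rw [div_pow, one_pow, pow_succ]; ring
  have hFsum : Summable F :=
    Summable.of_nonneg_of_le hFnn hbound (summable_geometric_two.mul_left 2)
  have hmain : ∀ (n m : ℕ), (∀ j, 1 ≤ j → j ≤ m → c (n + j) = 0) →
      ‖((a n : ℤ)) • x‖ ≤ 2 * (1/2:ℝ)^m := by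
    intro n m hz
    have hsum1 : Summable (fun k => F (k + (n+1))) := (summable_nat_add_iff (n+1)).2 hFsum
    set T := ∑' k, F (k + (n+1)) with hT
    have hS : (∑' j, F j) = (∑ i ∈ Finset.range (n+1), F i) + T :=
      (hFsum.sum_add_tsum_nat_add (n+1)).symm
    set N : ℕ := ∑ i ∈ Finset.range (n+1), c i * (a n / a i) with hN
    have hNcast : (N:ℝ) = (a n : ℝ) * ∑ i ∈ Finset.range (n+1), F i := by
      rw [hN, Nat.cast_sum, Finset.mul_sum]
      apply Finset.sum_congr rfl
      intro i hi
      have hd : a i ∣ a n := hdvd_le i n (by have := Finset.mem_range.mp hi; omega)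
      have hne : (a i : ℝ) ≠ 0 := by exact_mod_cast (hapos i).ne'
      rw [Nat.cast_mul, Nat.cast_div hd hne]
      simp only [hF]
      ring
    have hxcoe : ((a n : ℤ)) • x = (((a n : ℝ) * (∑' j, F j) : ℝ) : AddCircle (1:ℝ)) := by
      rw [hxeq, ← AddCircle.coe_zsmul]
      congr 1
      rw [zsmul_eq_mul, Int.cast_natCast]
    have hnorm1 : ‖(a n:ℤ) • x‖ ≤ |(a n:ℝ) * (∑' j, F j) - N| := by
      rw [hxcoe, AddCircle.norm_eq]
      have h := round_le ((a n:ℝ) * (∑' j, F j)) N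
      simpa using h
    have hdiff : (a n:ℝ) * (∑' j, F j) - N = (a n:ℝ) * T := by
      rw [hS, hNcast]; ring
    have hzero_part : ∀ i ∈ Finset.range m, F (i + (n+1)) = 0 := by
      intro i hi
      have him : i < m := Finset.mem_range.mp hi
      have hcz : c (i + (n+1)) = 0 := by
        have := hz (i+1) (by omega) (by omega)
        rwa [show n + (i+1) = i + (n+1) by omega] at this
      rw [hF]
      simp [hcz]
    have hsum2 : Summable (fun k => F (k + m + (n+1))) := (summable_nat_add_iff m).2 hsum1
    have hTtail : T = ∑' k, F (k + m + (n+1)) := by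
      have h := Summable.sum_add_tsum_nat_add (f := fun k => F (k + (n+1))) m hsum1
      rw [Finset.sum_eq_zero hzero_part, zero_add] at h
      exact h.symm
    have hgeo : ∀ k:ℕ, (a n:ℝ) * F (k + m + (n+1)) ≤ (1/2:ℝ)^m * (1/2)^k := by
      intro k
      have hj : 1 ≤ k + m + (n+1) := by omega
      have h1 : F (k + m + (n+1)) ≤ 1 / (a (k + m + (n+1) - 1) : ℝ) := hterm _ hj
      rw [show k + m + (n+1) - 1 = n + (m+k) by omega] at h1
      have h2 : (2:ℝ)^(m+k) * a n ≤ a (n + (m+k)) := by exact_mod_cast hgrow n (m+k)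
      have hpos2 : (0:ℝ) < a (n+(m+k)) := by exact_mod_cast hapos _
      calc (a n:ℝ) * F (k + m + (n+1)) ≤ (a n:ℝ) * (1 / a (n + (m+k))) :=
            mul_le_mul_of_nonneg_left h1 (Nat.cast_nonneg _)
        _ = (a n:ℝ) / a (n + (m+k)) := by ring
        _ ≤ (1/2:ℝ)^(m+k) := by
            rw [div_pow, one_pow, div_le_div_iff₀ hpos2 (by positivity)]
            rw [one_mul, mul_comm]
            exact h2
        _ = (1/2:ℝ)^m * (1/2)^k := pow_add _ _ _
    have hTle : (a n:ℝ) * T ≤ 2 * (1/2:ℝ)^m := by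
      rw [hTtail, ← tsum_mul_left]
      have hsumR : Summable (fun k:ℕ => (1/2:ℝ)^m * (1/2)^k) := summable_geometric_two.mul_left _
      calc (∑' k, (a n:ℝ) * F (k + m + (n+1))) ≤ ∑' k:ℕ, (1/2:ℝ)^m * (1/2)^k :=
            Summable.tsum_le_tsum hgeo (hsum2.mul_left _) hsumR
        _ = (1/2:ℝ)^m * 2 := by rw [tsum_mul_left, tsum_geometric_two]
        _ = 2 * (1/2:ℝ)^m := by ring
    have hTnn : 0 ≤ T := tsum_nonneg (fun k => hFnn _)
    calc ‖(a n:ℤ) • x‖ ≤ |(a n:ℝ) * (∑' j, F j) - N| := hnorm1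
      _ = |(a n:ℝ)*T| := by rw [hdiff]
      _ = (a n:ℝ)*T := abs_of_nonneg (mul_nonneg (Nat.cast_nonneg _) hTnn)
      _ ≤ 2*(1/2:ℝ)^m := hTle
  -- wrap up
  simp only [statChar, Set.mem_setOf_eq]
  intro ε hε
  obtain ⟨m, hm⟩ : ∃ m:ℕ, (1/2:ℝ)^m < ε/2 :=
    exists_pow_lt_of_lt_one (by linarith) (by norm_num)
  have hUm : ∀ M:ℕ, {n | ∃ j, 1 ≤ j ∧ j ≤ M ∧ c (n + j) ≠ 0} ∈ Zd f g := by
    intro M; induction M with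
    | zero =>
      refine zd_squeeze f hf g hg 0 (fun n => ?_) hsupp
      have he : {n | ∃ j, 1 ≤ j ∧ j ≤ 0 ∧ c (n + j) ≠ 0} ⊆ {n | c n ≠ 0} := by
        intro n hn; obtain ⟨j,h1,h2,_⟩ := hn; omega
      simpa using cnt_mono_s11 he n
    | succ M ih =>
      have hsub : {n | ∃ j, 1 ≤ j ∧ j ≤ M+1 ∧ c (n + j) ≠ 0} ⊆
          {n | ∃ j, 1 ≤ j ∧ j ≤ M ∧ c (n + j) ≠ 0} ∪ {n | c (n + (M+1)) ≠ 0} := by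
        intro n hn; obtain ⟨j,h1,h2,h3⟩ := hn
        rcases Nat.lt_or_ge j (M+1) with h|h
        · exact Or.inl ⟨j, h1, by omega, h3⟩
        · have hj : j = M+1 := by omega
          exact Or.inr (by rwa [hj] at h3)
      have hshift : {n | c (n + (M+1)) ≠ 0} ∈ Zd f g :=
        zd_squeeze f hf g hg (M+2) (fun n => by simpa using cnt_shift c (M+1) n) hsupp
      exact zd_squeeze f hf g hg 0 (fun n => by simpa using cnt_mono_s11 hsub n)
        (zd_union f hf g hg ih hshift)
  have hsubfin : {n : ℕ | ε ≤ ‖((fun n => (a n:ℤ)) n) • x‖} ⊆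
      {n | ∃ j, 1 ≤ j ∧ j ≤ m ∧ c (n + j) ≠ 0} := by
    intro n hn
    by_contra hcon
    simp only [Set.mem_setOf_eq, not_exists, not_and, not_not] at hcon
    have hz : ∀ j, 1 ≤ j → j ≤ m → c (n + j) = 0 := hcon
    have hb := hmain n m hz
    have : ε ≤ ‖(a n:ℤ) • x‖ := hn
    linarith
  exact zd_squeeze f hf g hg 0 (fun n => by simpa using cnt_mono_s11 hsubfin n) (hUm m)
end

section
/- Let (a_n) be an arithmetic sequence with ratios q_n ≥ 2. Suppose x ∈ 𝕋 has canonical representation with supp(x) = ⋃_{r≥1} [n_{2r−1}, n_{2r}] for some sequence (n_r) with d^f_g({n_r : r ∈ ℕ}) = 0, and c_n = q_n − 1 for all n ∈ supp(x). Then x ∈ t^{f,g}_{(a_n)}(𝕋). -/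
open Filter Set

set_option maxHeartbeats 2000000 in
theorem stmt12 (f : ℝ → ℝ) (hf : IsUnboundedModulus f) (g : ℕ → ℝ) (hg : IsWeight g)
    (a : ℕ → ℕ) (ha : IsArith a) (x : AddCircle (1 : ℝ)) (c : ℕ → ℕ)
    (hx : IsCanonRep a c x) (nn : ℕ → ℕ) (hnn : StrictMono nn)
    (hzero : Set.range nn ∈ Zd f g)
    (hsupp : {m | c m ≠ 0} = ⋃ r : ℕ, Set.Icc (nn (2 * r)) (nn (2 * r + 1)))
    (hc : ∀ m, c m ≠ 0 → c m = a m / a (m - 1) - 1) :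
    x ∈ statChar f g (fun n => (a n : ℤ)) := by
  classical
  obtain ⟨⟨fnn, fzero, fsub, fmono, -⟩, ftop⟩ := hf
  obtain ⟨ha0, hmono, hdvd, hq⟩ := ha
  obtain ⟨hc0, hcle, -, hxeq⟩ := hx
  have apos : ∀ n, 0 < a n := by
    intro n
    have := hmono.monotone (Nat.zero_le n)
    omega
  have advd : ∀ m n, m ≤ n → a m ∣ a n := by
    intro m n h
    induction n, h using Nat.le_induction with
    | base => exact dvd_rfl
    | succ n hn ih => exact ih.trans (hdvd n)
  have agrow : ∀ n k, a n * 2 ^ k ≤ a (n + k) := by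
    intro n k
    induction k with
    | zero => simp
    | succ k ih =>
      have := hq (n + k)
      calc a n * 2 ^ (k+1) = a n * 2 ^ k * 2 := by ring
        _ ≤ a (n + k) * 2 := by omega
        _ ≤ a (n + (k+1)) := by rw [show n + (k+1) = (n+k)+1 from rfl]; omega
  have apr : ∀ n, (0:ℝ) < a n := fun n => by exact_mod_cast apos n
  set u : ℕ → ℝ := fun m => (c m : ℝ) / (a m : ℝ) with hu
  have hun : ∀ m, 0 ≤ u m := fun m => by positivity
  have hterm : ∀ p, u (p+1) ≤ 1 / (a p : ℝ) - 1 / (a (p+1) : ℝ) := by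
    intro p
    have hqa : a p * (a (p+1) / a p) = a (p+1) := Nat.mul_div_cancel' (hdvd p)
    have hcq : (c (p+1) : ℝ) ≤ (a (p+1) / a p : ℕ) - 1 := by
      have h1 := hcle (p+1) (by omega)
      have h2 := hq p
      simp only [Nat.add_sub_cancel] at h1
      have h3 : c (p+1) + 1 ≤ a (p+1) / a p := by
        have : 2 ≤ a (p+1) / a p := by
          have := apos p; nlinarith [hqa]
        omega
      have h4 : ((c (p+1) : ℝ) + 1) ≤ ((a (p+1) / a p : ℕ) : ℝ) := by exact_mod_cast h3
      linarith
    have hqr : ((a (p+1) / a p : ℕ) : ℝ) = (a (p+1) : ℝ) / (a p : ℝ) := by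
      rw [Nat.cast_div (hdvd p) (by exact_mod_cast (apos p).ne')]
    have h1 : (1:ℝ) / (a p : ℝ) - 1 / (a (p+1):ℝ) = (((a (p+1) / a p : ℕ) : ℝ) - 1) / (a (p+1):ℝ) := by
      rw [hqr]
      have h2 := apr p; have h3 := apr (p+1)
      field_simp
    rw [h1, hu]
    have := apr (p+1)
    dsimp only
    gcongr
  have hexact : ∀ p, c (p+1) ≠ 0 → u (p+1) = 1 / (a p : ℝ) - 1 / (a (p+1) : ℝ) := by
    intro p hp
    have hcp : c (p+1) = a (p+1) / a p - 1 := by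
      have := hc (p+1) hp
      simpa using this
    have hqa : a p * (a (p+1) / a p) = a (p+1) := Nat.mul_div_cancel' (hdvd p)
    have hq2 : 2 ≤ a (p+1) / a p := by
      have h2 := hq p; have := apos p; nlinarith [hqa]
    have hcq : (c (p+1) : ℝ) = ((a (p+1) / a p : ℕ) : ℝ) - 1 := by
      rw [hcp]
      have : a (p+1) / a p - 1 + 1 = a (p+1) / a p := by omega
      push_cast [this]
      have h5 : ((a (p+1) / a p - 1 : ℕ) : ℝ) + 1 = ((a (p+1) / a p : ℕ) : ℝ) := by
        exact_mod_cast congrArg (Nat.cast : ℕ → ℝ) this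
      linarith
    have hqr : ((a (p+1) / a p : ℕ) : ℝ) = (a (p+1) : ℝ) / (a p : ℝ) := by
      rw [Nat.cast_div (hdvd p) (by exact_mod_cast (apos p).ne')]
    have h1 : (1:ℝ) / (a p : ℝ) - 1 / (a (p+1):ℝ) = (((a (p+1) / a p : ℕ) : ℝ) - 1) / (a (p+1):ℝ) := by
      rw [hqr]
      have h2 := apr p; have h3 := apr (p+1)
      field_simp
    rw [h1, hu]
    dsimp only
    rw [hcq]
  have hgeo : ∀ p, (1:ℝ) / (a p : ℝ) ≤ (1/2:ℝ)^p := by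
    intro p
    have h := agrow 0 p
    rw [zero_add, ha0, one_mul] at h
    have h2 : ((2:ℝ))^p ≤ (a p : ℝ) := by exact_mod_cast h
    rw [div_pow, one_pow]
    apply div_le_div_of_nonneg_left (by norm_num) (by positivity) h2
  have hsum : Summable u := by
    have hb : ∀ m, u m ≤ 2 * (1/2:ℝ)^m := by
      intro m
      match m with
      | 0 =>
        have : u 0 = 0 := by rw [hu]; simp [hc0]
        rw [this]; norm_num
      | (p+1) =>
        have h1 := hterm p
        have h2 := hgeo p
        have h3 : (0:ℝ) < 1/(a (p+1):ℝ) := one_div_pos.mpr (apr (p+1))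
        have h4 : (1/2:ℝ)^p = 2 * (1/2)^(p+1) := by ring
        linarith
    exact Summable.of_nonneg_of_le hun hb
      ((summable_geometric_of_lt_one (by norm_num) (by norm_num)).mul_left 2)
  have hsumsh : ∀ k, Summable (fun m => u (m + k)) := fun k => (summable_nat_add_iff k).mpr hsum
  set t : ℕ → ℝ := fun n => ∑' m, u (m + (n+1)) with htdef
  have ht0 : ∀ n, 0 ≤ t n := fun n => tsum_nonneg (fun m => hun _)
  have htle : ∀ n, t n ≤ 1 / (a n : ℝ) := by
    intro n
    apply Real.tsum_le_of_sum_range_le (fun m => hun _)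
    intro M
    have tele := Finset.sum_range_sub' (fun i => 1/(a (n+i):ℝ)) M
    calc ∑ m ∈ Finset.range M, u (m + (n+1))
        ≤ ∑ m ∈ Finset.range M, (1/(a (n+m):ℝ) - 1/(a (n+m+1):ℝ)) := by
          apply Finset.sum_le_sum
          intro m _
          rw [show m + (n+1) = (n+m)+1 by omega]
          exact hterm (n+m)
      _ = 1/(a n:ℝ) - 1/(a (n+M):ℝ) := by simpa [add_assoc] using tele
      _ ≤ 1/(a n:ℝ) := by
          have := apr (n+M)
          have : (0:ℝ) ≤ 1/(a (n+M):ℝ) := by positivity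
          linarith
  have hsplit : ∀ n k, t n = (∑ m ∈ Finset.range k, u (m + (n+1))) + t (n+k) := by
    intro n k
    have h := Summable.sum_add_tsum_nat_add (f := fun m => u (m + (n+1))) k (hsumsh (n+1))
    have e : (fun i => u ((i + k) + (n+1))) = (fun i => u (i + ((n+k)+1))) := by
      funext i; congr 1; omega
    rw [htdef]
    dsimp only
    rw [← h]
    congr 1
    exact congrArg tsum e
  have hstep1 : ∀ n k, (∀ m, n < m → m ≤ n + k → c m ≠ 0) →
      t n = (1/(a n:ℝ) - 1/(a (n+k):ℝ)) + t (n+k) := by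
    intro n k hcc
    rw [hsplit n k]
    congr 1
    have tele := Finset.sum_range_sub' (fun i => 1/(a (n+i):ℝ)) k
    calc ∑ m ∈ Finset.range k, u (m + (n+1))
        = ∑ m ∈ Finset.range k, (1/(a (n+m):ℝ) - 1/(a (n+m+1):ℝ)) := by
          apply Finset.sum_congr rfl
          intro m hm
          simp only [Finset.mem_range] at hm
          rw [show m + (n+1) = (n+m)+1 by omega]
          exact hexact (n+m) (hcc _ (by omega) (by omega))
      _ = 1/(a n:ℝ) - 1/(a (n+k):ℝ) := by simpa [add_assoc] using tele
  have hstep0 : ∀ n k, (∀ m, n < m → m ≤ n + k → c m = 0) → t n = t (n+k) := by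
    intro n k hcc
    rw [hsplit n k]
    have hz : ∑ m ∈ Finset.range k, u (m + (n+1)) = 0 := by
      apply Finset.sum_eq_zero
      intro m hm
      simp only [Finset.mem_range] at hm
      have : c (m + (n+1)) = 0 := hcc _ (by omega) (by omega)
      rw [hu]; dsimp only; rw [this]; simp
    rw [hz, zero_add]
  -- the point identity
  have hpt : ∀ n, (a n : ℤ) • x = (((a n : ℝ) * t n : ℝ) : AddCircle (1:ℝ)) := by
    intro n
    rw [hxeq]
    rw [← QuotientAddGroup.mk_zsmul]
    have hz : ((a n : ℤ) • (∑' m, u m) : ℝ) = (a n : ℝ) * (∑' m, u m) := by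
      rw [zsmul_eq_mul]; push_cast; ring
    rw [hz]
    have hS : (∑' m, u m) = (∑ m ∈ Finset.range (n+1), u m) + t n := by
      have h := Summable.sum_add_tsum_nat_add (f := u) (n+1) hsum
      rw [htdef]; dsimp only; linarith
    have hP : (a n:ℝ) * (∑ m ∈ Finset.range (n+1), u m)
        = ((∑ m ∈ Finset.range (n+1), c m * (a n / a m) : ℕ) : ℝ) := by
      rw [Nat.cast_sum, Finset.mul_sum]
      apply Finset.sum_congr rfl
      intro m hm
      simp only [Finset.mem_range] at hm
      have hd : a m ∣ a n := advd m n (by omega)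
      rw [Nat.cast_mul, Nat.cast_div hd (by exact_mod_cast (apos m).ne')]
      rw [hu]; dsimp only
      have := apr m
      field_simp
    have key : (a n:ℝ) * (∑' m, u m)
        = ((∑ m ∈ Finset.range (n+1), c m * (a n / a m) : ℕ) : ℝ) + (a n:ℝ) * t n := by
      rw [hS, mul_add, hP]
    rw [key]
    rw [QuotientAddGroup.mk_add]
    have : ((((∑ m ∈ Finset.range (n+1), c m * (a n / a m) : ℕ) : ℝ)) : AddCircle (1:ℝ)) = 0 := by
      rw [AddCircle.coe_eq_zero_iff]
      refine ⟨((∑ m ∈ Finset.range (n+1), c m * (a n / a m) : ℕ) : ℤ), ?_⟩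
      rw [zsmul_eq_mul, mul_one]
      exact Int.cast_natCast _
    rw [this, zero_add]
  have hnormle : ∀ (y : ℝ) (z : ℤ), ‖((y:ℝ) : AddCircle (1:ℝ))‖ ≤ |y - z| := by
    intro y z
    rw [AddCircle.norm_eq]
    simpa using round_le y z
  have hfrac : ∀ n k, (a n:ℝ)/(a (n+k):ℝ) ≤ (1/2:ℝ)^k := by
    intro n k
    have h2 : (a n:ℝ) * 2^k ≤ (a (n+k):ℝ) := by exact_mod_cast agrow n k
    have h3 : (0:ℝ) < 2^k := by positivity
    rw [div_le_iff₀ (apr (n+k))]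
    calc (a n:ℝ) = (a n * 2^k)/2^k := by field_simp
      _ ≤ (a (n+k):ℝ)/2^k := by gcongr
      _ = (1/2)^k * (a (n+k):ℝ) := by rw [div_pow, one_pow]; ring
  have hkey : ∀ n k, ((∀ m, n < m → m ≤ n+k → c m ≠ 0) ∨ (∀ m, n < m → m ≤ n+k → c m = 0)) →
      ‖(a n : ℤ) • x‖ ≤ (1/2:ℝ)^k := by
    intro n k hcase
    rw [hpt n]
    have han := apr n
    have hank := apr (n+k)
    have h2 := ht0 (n+k)
    have h3 := htle (n+k)
    have h4 := hfrac n k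
    have h5 : (a n:ℝ) * t (n+k) ≤ (a n:ℝ) / (a (n+k):ℝ) := by
      calc (a n:ℝ) * t (n+k) ≤ (a n:ℝ) * (1/(a (n+k):ℝ)) :=
            mul_le_mul_of_nonneg_left h3 han.le
        _ = (a n:ℝ) / (a (n+k):ℝ) := by ring
    have h6 : (0:ℝ) ≤ (a n:ℝ) * t (n+k) := by positivity
    rcases hcase with hca | hca
    · refine le_trans (hnormle _ 1) ?_
      rw [hstep1 n k hca]
      have heq : (a n:ℝ) * ((1/(a n:ℝ) - 1/(a (n+k):ℝ)) + t (n+k)) - ((1:ℤ):ℝ)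
          = (a n:ℝ) * t (n+k) - (a n:ℝ)/(a (n+k):ℝ) := by
        push_cast
        field_simp
        ring
      rw [heq, abs_le]
      constructor
      · linarith
      · have : (0:ℝ) ≤ (1/2:ℝ)^k := by positivity
        linarith
    · refine le_trans (hnormle _ 0) ?_
      rw [hstep0 n k hca]
      rw [Int.cast_zero, sub_zero, abs_of_nonneg h6]
      linarith
  -- support structure
  have hsuppmem : ∀ m, c m ≠ 0 ↔ ∃ r, nn (2*r) ≤ m ∧ m ≤ nn (2*r+1) := by
    intro m
    constructor
    · intro h
      have hm : m ∈ {m | c m ≠ 0} := h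
      rw [hsupp] at hm
      simpa [Set.mem_iUnion, Set.mem_Icc] using hm
    · rintro ⟨r, h1, h2⟩
      have hm : m ∈ ⋃ r, Set.Icc (nn (2*r)) (nn (2*r+1)) :=
        Set.mem_iUnion.mpr ⟨r, Set.mem_Icc.mpr ⟨h1, h2⟩⟩
      rw [← hsupp] at hm
      exact hm
  have htrans : ∀ m, ¬ (c m = 0 ↔ c (m+1) = 0) →
      (m ∈ Set.range nn ∨ m + 1 ∈ Set.range nn) := by
    intro m hm
    by_cases h1 : c m = 0
    · have h2 : c (m+1) ≠ 0 := by tauto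
      obtain ⟨r, hr1, hr2⟩ := (hsuppmem (m+1)).mp h2
      right
      rcases eq_or_lt_of_le hr1 with he | hl
      · exact ⟨2*r, he⟩
      · exact absurd h1 ((hsuppmem m).mpr ⟨r, by omega, by omega⟩)
    · have h2 : c (m+1) = 0 := by tauto
      obtain ⟨r, hr1, hr2⟩ := (hsuppmem m).mp h1
      left
      rcases eq_or_lt_of_le hr2 with he | hl
      · exact ⟨2*r+1, he.symm⟩
      · exact absurd ((hsuppmem (m+1)).mpr ⟨r, by omega, by omega⟩)
          (not_not.mpr h2)
  have hfind : ∀ i j, i ≤ j → ¬ (c i = 0 ↔ c j = 0) →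
      ∃ m, i ≤ m ∧ m < j ∧ ¬ (c m = 0 ↔ c (m+1) = 0) := by
    intro i j hij
    induction j, hij using Nat.le_induction with
    | base => intro h; exact absurd Iff.rfl h
    | succ j hj ih =>
      intro h
      by_cases hcj : c j = 0 ↔ c (j+1) = 0
      · have : ¬ (c i = 0 ↔ c j = 0) := by tauto
        obtain ⟨m, h1, h2, h3⟩ := ih this
        exact ⟨m, h1, by omega, h3⟩
      · exact ⟨j, hj, by omega, hcj⟩
  -- modulus facts
  have f00 : f 0 = 0 := (fzero 0 le_rfl).mpr rfl
  have fmul : ∀ (j : ℕ) (y : ℝ), 0 ≤ y → f ((j:ℝ) * y) ≤ (j:ℝ) * f y := by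
    intro j y hy
    induction j with
    | zero => simp [f00]
    | succ j ih =>
      have he : ((j+1:ℕ):ℝ) * y = (j:ℕ)*y + y := by push_cast; ring
      rw [he]
      have h1 : f ((j:ℕ)*y + y) ≤ f ((j:ℕ)*y) + f y := fsub _ _ (by positivity) hy
      have h2 : (0:ℝ) ≤ f y := fnn y hy
      push_cast
      push_cast at ih
      linarith
  have ftg : Tendsto (fun n => f (g n)) atTop atTop := ftop.comp hg.2.1
  simp only [Zd, Set.mem_setOf_eq] at hzero
  -- main argument
  simp only [statChar, Set.mem_setOf_eq]
  intro ε hε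
  obtain ⟨k0, hk0⟩ := exists_pow_lt_of_lt_one hε (by norm_num : (1/2:ℝ) < 1)
  set k := k0 + 1 with hk
  have hkε : (1/2:ℝ)^k < ε :=
    lt_of_le_of_lt (pow_le_pow_of_le_one (by norm_num) (by norm_num) (by omega)) hk0
  have hk1 : 1 ≤ k := by omega
  simp only [Zd, Set.mem_setOf_eq]
  set A : Set ℕ := {n : ℕ | ε ≤ ‖((fun n => (a n : ℤ)) n) • x‖} with hA
  have hAmem : ∀ j, j ∈ A ↔ ε ≤ ‖(a j : ℤ) • x‖ := by intro j; rfl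
  have hAB : ∀ j, j ∈ A → ∃ b, b ∈ Set.range nn ∧ j < b ∧ b ≤ j + k := by
    intro j hj
    rw [hAmem] at hj
    by_contra hcon
    push_neg at hcon
    have hncase : ¬ ((∀ m, j < m → m ≤ j+k → c m ≠ 0) ∨ (∀ m, j < m → m ≤ j+k → c m = 0)) := by
      intro hcase
      have := hkey j k hcase
      linarith
    push_neg at hncase
    obtain ⟨h1, h2⟩ := hncase
    obtain ⟨i, hi1, hi2, hi3⟩ := h1
    obtain ⟨l, hl1, hl2, hl3⟩ := h2
    have main : ∃ m, j < m ∧ m < j + k ∧ ¬ (c m = 0 ↔ c (m+1) = 0) := by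
      rcases le_total i l with hle | hle
      · have hne : ¬ (c i = 0 ↔ c l = 0) := by tauto
        obtain ⟨m, hm1, hm2, hm3⟩ := hfind i l hle hne
        exact ⟨m, by omega, by omega, hm3⟩
      · have hne : ¬ (c l = 0 ↔ c i = 0) := by tauto
        obtain ⟨m, hm1, hm2, hm3⟩ := hfind l i hle hne
        exact ⟨m, by omega, by omega, hm3⟩
    obtain ⟨m, hm1, hm2, hm3⟩ := main
    rcases htrans m hm3 with hb | hb
    · exact absurd (hcon m hb (by omega)) (by omega)
    · exact absurd (hcon (m+1) hb (by omega)) (by omega)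
  -- counting estimates
  have hcnt1 : ∀ n, cnt A n ≤ cnt (Set.range nn) (n+k) * k := by
    intro n
    unfold cnt
    have hcard : (((Finset.Icc 1 (n+k)).filter (fun m => m ∈ Set.range nn)) ×ˢ
        Finset.Icc 1 k).card = ((Finset.Icc 1 (n+k)).filter (fun m => m ∈ Set.range nn)).card * k := by
      rw [Finset.card_product, Nat.card_Icc]
      congr 1
    rw [← hcard]
    set φ : ℕ → ℕ × ℕ := fun j =>
      if h : ∃ b, b ∈ Set.range nn ∧ j < b ∧ b ≤ j + k then (h.choose, h.choose - j)
      else (0, 0) with hφ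
    apply Finset.card_le_card_of_injOn φ
    · intro j hj
      simp only [Finset.coe_filter, Set.mem_setOf_eq, Finset.mem_filter, Finset.mem_Icc] at hj
      obtain ⟨⟨hj1, hj2⟩, hj3⟩ := hj
      have hex := hAB j hj3
      rw [hφ]
      simp only [dif_pos hex]
      obtain ⟨hb1, hb2, hb3⟩ := hex.choose_spec
      simp only [Finset.coe_product, Set.mem_prod, Finset.mem_coe, Finset.mem_product, Finset.mem_filter, Finset.mem_Icc]
      refine ⟨⟨⟨by omega, by omega⟩, hb1⟩, by omega, by omega⟩
    · intro j1 hj1 j2 hj2 hfe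
      simp only [Finset.coe_filter, Set.mem_setOf_eq, Finset.mem_Icc] at hj1 hj2
      have hex1 := hAB j1 hj1.2
      have hex2 := hAB j2 hj2.2
      rw [hφ] at hfe
      simp only [dif_pos hex1, dif_pos hex2, Prod.mk.injEq] at hfe
      obtain ⟨hb1, hb2, hb3⟩ := hex1.choose_spec
      obtain ⟨hd1, hd2, hd3⟩ := hex2.choose_spec
      omega
  have hcnt2 : ∀ n, cnt (Set.range nn) (n+k) ≤ cnt (Set.range nn) n + k := by
    intro n
    unfold cnt
    have hsub : (Finset.Icc 1 (n+k)).filter (fun m => m ∈ Set.range nn) ⊆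
        ((Finset.Icc 1 n).filter (fun m => m ∈ Set.range nn)) ∪ Finset.Ioc n (n+k) := by
      intro m hm
      simp only [Finset.mem_filter, Finset.mem_Icc] at hm
      simp only [Finset.mem_union, Finset.mem_filter, Finset.mem_Icc, Finset.mem_Ioc]
      rcases le_or_gt m n with h | h
      · exact Or.inl ⟨⟨hm.1.1, h⟩, hm.2⟩
      · exact Or.inr ⟨h, hm.1.2⟩
    calc ((Finset.Icc 1 (n+k)).filter (fun m => m ∈ Set.range nn)).card
        ≤ (((Finset.Icc 1 n).filter (fun m => m ∈ Set.range nn)) ∪ Finset.Ioc n (n+k)).card :=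
          Finset.card_le_card hsub
      _ ≤ ((Finset.Icc 1 n).filter (fun m => m ∈ Set.range nn)).card + (Finset.Ioc n (n+k)).card :=
          Finset.card_union_le _ _
      _ = ((Finset.Icc 1 n).filter (fun m => m ∈ Set.range nn)).card + k := by
          rw [Nat.card_Ioc]; congr 1; omega
  have hcard : ∀ n, (cnt A n : ℝ) ≤ (k:ℝ) * (cnt (Set.range nn) n : ℝ) + (k:ℝ)*(k:ℝ) := by
    intro n
    have h1 := hcnt1 n
    have h2 := hcnt2 n
    have : cnt A n ≤ k * cnt (Set.range nn) n + k * k := by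
      calc cnt A n ≤ cnt (Set.range nn) (n+k) * k := h1
        _ ≤ (cnt (Set.range nn) n + k) * k := by
            apply Nat.mul_le_mul_right
            exact h2
        _ = k * cnt (Set.range nn) n + k * k := by ring
    exact_mod_cast this
  -- final limit computation
  have hupper : Tendsto (fun n => (k:ℝ) * (f (cnt (Set.range nn) n) / f (g n))
      + f ((k:ℝ)*(k:ℝ)) / f (g n)) atTop (nhds 0) := by
    have h1 := hzero.const_mul (k:ℝ)
    have h2 : Tendsto (fun n => f ((k:ℝ)*(k:ℝ)) / f (g n)) atTop (nhds 0) :=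
      tendsto_const_nhds.div_atTop ftg
    simpa using h1.add h2
  apply tendsto_of_tendsto_of_tendsto_of_le_of_le' tendsto_const_nhds hupper
  · filter_upwards [ftg.eventually_ge_atTop 1] with n hn
    apply div_nonneg
    · exact fnn _ (by positivity)
    · linarith
  · filter_upwards [ftg.eventually_ge_atTop 1] with n hn
    have hfg : (0:ℝ) < f (g n) := by linarith
    have hnum : f ((cnt A n : ℝ)) ≤ (k:ℝ) * f ((cnt (Set.range nn) n : ℝ)) + f ((k:ℝ)*(k:ℝ)) := by
      have hb := hcard n
      have step1 : f ((cnt A n : ℝ)) ≤ f ((k:ℝ) * (cnt (Set.range nn) n : ℝ) + (k:ℝ)*(k:ℝ)) :=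
        fmono _ _ (by positivity) hb
      have step2 : f ((k:ℝ) * (cnt (Set.range nn) n : ℝ) + (k:ℝ)*(k:ℝ))
          ≤ f ((k:ℝ) * (cnt (Set.range nn) n : ℝ)) + f ((k:ℝ)*(k:ℝ)) :=
        fsub _ _ (by positivity) (by positivity)
      have step3 : f ((k:ℝ) * (cnt (Set.range nn) n : ℝ)) ≤ (k:ℝ) * f ((cnt (Set.range nn) n : ℝ)) :=
        fmul k _ (by positivity)
      linarith
    calc f ((cnt A n : ℝ)) / f (g n)
        ≤ ((k:ℝ) * f ((cnt (Set.range nn) n : ℝ)) + f ((k:ℝ)*(k:ℝ))) / f (g n) := by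
          exact div_le_div_of_nonneg_right hnum hfg.le
      _ = (k:ℝ) * (f ((cnt (Set.range nn) n : ℝ)) / f (g n)) + f ((k:ℝ)*(k:ℝ)) / f (g n) := by
          ring
end
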